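/- arXiv:1901.07944 — 4 statements merged into one kernel-verified Lean document; each statement's English description precedes it below -/
import Mathlib

section
/- Let R̂, Q̂ be two sets of node-disjoint paths in a graph Ĝ, and let ŵ, D̂ > 0 be integers. Assume that each path Q ∈ Q̂ intersects at least 2D̂ distinct paths of R̂, and that |Q̂| ≥ 2|R̂|·ŵ/D̂. Then there is a partition (R̂', R̂'') of R̂, and a subset Q̂' ⊆ Q̂ of paths, such that (R̂', Q̂') is a (ŵ, D̂)-intersecting pair of path sets, |Q̂'| ≥ |Q̂|/2, and every path in R̂'' intersects at most ŵ paths of Q̂'. -/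
open SimpleGraph

/-- A simple path in a graph `G`, packaged with its two endpoints. -/
structure GraphPath {V : Type} (G : SimpleGraph V) where
  first : V
  last : V
  walk : G.Walk first last
  isPath : walk.IsPath

namespace GraphPath

variable {V : Type} {G : SimpleGraph V}

/-- The set of vertices of a path. -/
def support (p : GraphPath G) : Set V := {v | v ∈ p.walk.support}

/-- The set of edges of a path. -/
def edges (p : GraphPath G) : Set (Sym2 V) := {e | e ∈ p.walk.edges}

/-- The path is contained in the subgraph `H` of `G`. -/
def InSubgraph (p : GraphPath G) (H : G.Subgraph) : Prop :=
  p.support ⊆ H.verts ∧ p.edges ⊆ H.edgeSet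

/-- `p` is a contiguous subpath of `q` (its vertex sequence is a contiguous
subsequence of that of `q`). -/
def IsSubpathOf (p q : GraphPath G) : Prop :=
  p.walk.support <:+: q.walk.support

end GraphPath

section BasicDefs

variable {V : Type}

/-- `u` occurs strictly before `v` on the path `p`. -/
def beforeOn {G : SimpleGraph V} (p : GraphPath G) (u v : V) : Prop :=
  ∃ l₁ l₂ l₃ : List V, p.walk.support = l₁ ++ u :: (l₂ ++ v :: l₃)

/-- A family of pairwise vertex-disjoint paths. -/
def NodeDisjointFamily {ι : Type} {G : SimpleGraph V} (P : ι → GraphPath G) : Prop :=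
  ∀ i j, i ≠ j → Disjoint (P i).support (P j).support

/-- A family of pairwise edge-disjoint paths. -/
def EdgeDisjointFamily {ι : Type} {G : SimpleGraph V} (P : ι → GraphPath G) : Prop :=
  ∀ i j, i ≠ j → Disjoint (P i).edges (P j).edges

/-- `T` is node-well-linked in the subgraph `H` of `G`: every two disjoint (finite)
subsets `T', T''` of `T` are joined by `min |T'| |T''|` node-disjoint paths inside `H`. -/
def NodeWellLinkedIn (G : SimpleGraph V) (H : G.Subgraph) (T : Set V) : Prop :=
  ∀ T' T'' : Set V, T' ⊆ T → T'' ⊆ T → Disjoint T' T'' → T'.Finite → T''.Finite →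
    ∃ P : Fin (min T'.ncard T''.ncard) → GraphPath G,
      (∀ j, (P j).InSubgraph H) ∧ NodeDisjointFamily P ∧
        ∀ j, (P j).first ∈ T' ∧ (P j).last ∈ T''

/-- `(A, B)` are node-linked in the subgraph `H` of `G`. -/
def NodeLinkedIn (G : SimpleGraph V) (H : G.Subgraph) (A B : Set V) : Prop :=
  ∀ A' B' : Set V, A' ⊆ A → B' ⊆ B → A'.Finite → B'.Finite →
    ∃ P : Fin (min A'.ncard B'.ncard) → GraphPath G,
      (∀ j, (P j).InSubgraph H) ∧ NodeDisjointFamily P ∧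
        ∀ j, (P j).first ∈ A' ∧ (P j).last ∈ B'

/-- `T` is edge-well-linked in the subgraph `H` of `G`. -/
def EdgeWellLinkedIn (G : SimpleGraph V) (H : G.Subgraph) (T : Set V) : Prop :=
  ∀ T' T'' : Set V, T' ⊆ T → T'' ⊆ T → Disjoint T' T'' → T'.Finite → T''.Finite →
    ∃ P : Fin (min T'.ncard T''.ncard) → GraphPath G,
      (∀ j, (P j).InSubgraph H) ∧ EdgeDisjointFamily P ∧
        ∀ j, (P j).first ∈ T' ∧ (P j).last ∈ T''

/-- `T` is `w`-weakly well-linked in the subgraph `H` of `G`: every two disjoint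
subsets `T', T''` of `T` are joined by `min (min |T'| |T''|) w` edge-disjoint paths. -/
def WeaklyWellLinkedIn (G : SimpleGraph V) (H : G.Subgraph) (T : Set V) (w : ℕ) : Prop :=
  ∀ T' T'' : Set V, T' ⊆ T → T'' ⊆ T → Disjoint T' T'' → T'.Finite → T''.Finite →
    ∃ P : Fin (min (min T'.ncard T''.ncard) w) → GraphPath G,
      (∀ j, (P j).InSubgraph H) ∧ EdgeDisjointFamily P ∧
        ∀ j, (P j).first ∈ T' ∧ (P j).last ∈ T''

/-- The maximum vertex degree of `G` is at most `d`. -/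
def MaxDegreeLE (G : SimpleGraph V) (d : ℕ) : Prop :=
  ∀ v, (G.neighborSet v).ncard ≤ d

/-- The set of edges of `G` with one endpoint in `X` and the other in `Y`. -/
def crossEdges (G : SimpleGraph V) (X Y : Set V) : Set (Sym2 V) :=
  {e | e ∈ G.edgeSet ∧ ∃ x ∈ X, ∃ y ∈ Y, e = s(x, y)}

end BasicDefs

/-- Casting an index of a link set of a Path-of-Sets System to the index
of the cluster on its left. -/
def posIdx {ℓ : ℕ} (i : Fin (ℓ - 1)) : Fin ℓ :=
  ⟨i.val, by have := i.isLt; omega⟩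

/-- Casting an index of a link set of a Path-of-Sets System to the index
of the cluster on its right. -/
def posIdxSucc {ℓ : ℕ} (i : Fin (ℓ - 1)) : Fin ℓ :=
  ⟨i.val + 1, by have := i.isLt; omega⟩

/-- The index of the `i`-th odd-indexed cluster. -/
def oddIdx {ℓ : ℕ} (i : Fin ((ℓ + 1) / 2)) : Fin ℓ :=
  ⟨2 * i.val, by have := i.isLt; omega⟩

/-- A Path-of-Sets System of length `ℓ` and width `w` in the graph `G`. -/
structure PathOfSets {V : Type} (G : SimpleGraph V) (ℓ w : ℕ) where
  C : Fin ℓ → G.Subgraph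
  A : Fin ℓ → Set V
  B : Fin ℓ → Set V
  P : Fin (ℓ - 1) → Fin w → GraphPath G
  C_connected : ∀ i, (C i).Connected
  C_disjoint : ∀ i j, i ≠ j → Disjoint (C i).verts (C j).verts
  A_sub : ∀ i, A i ⊆ (C i).verts
  B_sub : ∀ i, B i ⊆ (C i).verts
  AB_disjoint : ∀ i, Disjoint (A i) (B i)
  A_card : ∀ i, (A i).ncard = w
  B_card : ∀ i, (B i).ncard = w
  P_first : ∀ i j, (P i j).first ∈ B (posIdx i)
  P_last : ∀ i j, (P i j).last ∈ A (posIdxSucc i)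
  P_disjoint : ∀ i j i' j', (i, j) ≠ (i', j') →
    Disjoint (P i j).support (P i' j').support
  P_internal : ∀ i j (k : Fin ℓ) v, v ∈ (P i j).support → v ∈ (C k).verts →
    v = (P i j).first ∨ v = (P i j).last

/-- A strong Path-of-Sets System. -/
def PathOfSets.Strong {V : Type} {G : SimpleGraph V} {ℓ w : ℕ}
    (PoS : PathOfSets G ℓ w) : Prop :=
  ∀ i, NodeWellLinkedIn G (PoS.C i) (PoS.A i) ∧ NodeWellLinkedIn G (PoS.C i) (PoS.B i) ∧
    NodeLinkedIn G (PoS.C i) (PoS.A i) (PoS.B i)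

/-- A weak Path-of-Sets System. -/
def PathOfSets.Weak {V : Type} {G : SimpleGraph V} {ℓ w : ℕ}
    (PoS : PathOfSets G ℓ w) : Prop :=
  ∀ i, EdgeWellLinkedIn G (PoS.C i) (PoS.A i ∪ PoS.B i)

/-- A hairy Path-of-Sets System of length `ℓ` and width `w`. -/
structure HairyPathOfSets {V : Type} (G : SimpleGraph V) (ℓ w : ℕ) where
  pos : PathOfSets G ℓ w
  strong : pos.Strong
  S : Fin ℓ → G.Subgraph
  S_connected : ∀ i, (S i).Connected
  S_disjoint : ∀ i j, i ≠ j → Disjoint (S i).verts (S j).verts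
  S_C_disjoint : ∀ i j, Disjoint (S i).verts (pos.C j).verts
  S_P_disjoint : ∀ i j k, Disjoint (S i).verts (pos.P j k).support
  Y : Fin ℓ → Set V
  Y_sub : ∀ i, Y i ⊆ (S i).verts
  Y_card : ∀ i, (Y i).ncard = w
  Y_wl : ∀ i, NodeWellLinkedIn G (S i) (Y i)
  X : Fin ℓ → Set V
  X_sub : ∀ i, X i ⊆ (pos.C i).verts
  X_card : ∀ i, (X i).ncard = w
  X_AB : ∀ i, X i ∩ (pos.A i ∪ pos.B i) = ∅
  X_linked : ∀ i, NodeLinkedIn G (pos.C i) (pos.A i) (X i)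
  Q : Fin ℓ → Fin w → GraphPath G
  Q_first : ∀ i j, (Q i j).first ∈ X i
  Q_last : ∀ i j, (Q i j).last ∈ Y i
  Q_disjoint : ∀ i j i' j', (i, j) ≠ (i', j') →
    Disjoint (Q i j).support (Q i' j').support
  Q_P_disjoint : ∀ i j i' j', Disjoint (Q i j).support (pos.P i' j').support
  Q_internal : ∀ i j (k : Fin ℓ) v, v ∈ (Q i j).support →
    (v ∈ (S k).verts ∨ v ∈ (pos.C k).verts) →
    v = (Q i j).first ∨ v = (Q i j).last

/-- An `(A, B, X)`-crossbar of width `ρ` inside the subgraph `H` of `G`. -/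
structure CrossbarIn {V : Type} (G : SimpleGraph V) (H : G.Subgraph)
    (A B X : Set V) (ρ : ℕ) where
  P : Fin ρ → GraphPath G
  Q : Fin ρ → GraphPath G
  P_in : ∀ i, (P i).InSubgraph H
  Q_in : ∀ i, (Q i).InSubgraph H
  P_first : ∀ i, (P i).first ∈ A
  P_last : ∀ i, (P i).last ∈ B
  P_disjoint : ∀ i j, i ≠ j → Disjoint (P i).support (P j).support
  Q_disjoint : ∀ i j, i ≠ j → Disjoint (Q i).support (Q j).support
  Q_last : ∀ i, (Q i).last ∈ X
  cross_disjoint : ∀ i j, i ≠ j → Disjoint (P i).support (Q j).support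
  touch : ∀ i, (P i).support ∩ (Q i).support = {(Q i).first}

/-- A model of the graph `H` as a minor of the graph `G`: every vertex of `H` is
mapped to a connected subgraph of `G`, the images being pairwise disjoint, and every
edge of `H` is mapped to a path of `G` connecting the images of its endpoints, the
paths being pairwise internally disjoint and internally disjoint from all the
vertex images. -/
structure MinorModel {V W : Type} (G : SimpleGraph V) (H : SimpleGraph W) where
  vmap : W → G.Subgraph
  vmap_connected : ∀ u, (vmap u).Connected
  vmap_disjoint : ∀ u u', u ≠ u' → Disjoint (vmap u).verts (vmap u').verts
  emap : ∀ ⦃u v : W⦄, H.Adj u v → GraphPath G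
  emap_first : ∀ ⦃u v : W⦄ (h : H.Adj u v), (emap h).first ∈ (vmap u).verts
  emap_last : ∀ ⦃u v : W⦄ (h : H.Adj u v), (emap h).last ∈ (vmap v).verts
  emap_internal : ∀ ⦃u v : W⦄ (h : H.Adj u v) (x : V) (u'' : W),
    x ∈ (emap h).support → x ∈ (vmap u'').verts →
    x = (emap h).first ∨ x = (emap h).last
  emap_disjoint : ∀ ⦃u v u' v' : W⦄ (h : H.Adj u v) (h' : H.Adj u' v'),
    s(u, v) ≠ s(u', v') → ∀ x, x ∈ (emap h).support → x ∈ (emap h').support →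
      (x = (emap h).first ∨ x = (emap h).last) ∧
      (x = (emap h').first ∨ x = (emap h').last)

/-- The `(g × g)`-grid graph. -/
def gridGraph (g : ℕ) : SimpleGraph (Fin g × Fin g) :=
  SimpleGraph.fromRel fun a b =>
    (a.1 = b.1 ∧ a.2.val + 1 = b.2.val) ∨ (a.2 = b.2 ∧ a.1.val + 1 = b.1.val)

/-- A tree-decomposition of the graph `G`. -/
structure TreeDecomp {V : Type} (G : SimpleGraph V) where
  ι : Type
  tree : SimpleGraph ι
  tree_isTree : tree.IsTree
  bag : ι → Set V
  bag_vertex : ∀ v : V, ∃ i, v ∈ bag i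
  bag_edge : ∀ ⦃u v : V⦄, G.Adj u v → ∃ i, u ∈ bag i ∧ v ∈ bag i
  bag_subtree : ∀ v : V, (tree.induce {i | v ∈ bag i}).Connected

/-- The treewidth of `G` is at least `k`: every tree-decomposition has a bag of
cardinality at least `k + 1`. -/
def HasTreewidthAtLeast {V : Type} (G : SimpleGraph V) (k : ℕ) : Prop :=
  ∀ D : TreeDecomp G, ∃ i, k + 1 ≤ (D.bag i).ncard

/-- A multigraph on the vertex type `ν`, with an abstract finite edge type
and no loops. -/
structure MultigraphOn (ν : Type) where
  E : Type
  E_finite : Finite E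
  ends : E → ν × ν
  no_loops : ∀ e, (ends e).1 ≠ (ends e).2

/-- The degree of a vertex in a multigraph. -/
noncomputable def MultigraphOn.degree {ν : Type} (M : MultigraphOn ν) (v : ν) : ℕ :=
  {e : M.E | (M.ends e).1 = v ∨ (M.ends e).2 = v}.ncard

/-- The set of edges of a multigraph with exactly one endpoint in `S`. -/
def MultigraphOn.crossing {ν : Type} (M : MultigraphOn ν) (S : Set ν) : Set M.E :=
  {e | ((M.ends e).1 ∈ S ∧ (M.ends e).2 ∉ S) ∨ ((M.ends e).1 ∉ S ∧ (M.ends e).2 ∈ S)}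

/-- A multigraph is a `1/2`-expander: every `S` with `|S| ≤ |V|/2` has at least
`|S|/2` edges leaving it. -/
def MultigraphOn.IsHalfExpander {ν : Type} (M : MultigraphOn ν) : Prop :=
  ∀ S : Set ν, 2 * S.ncard ≤ Nat.card ν → S.ncard ≤ 2 * (M.crossing S).ncard

/-- A model of the multigraph `M` as a minor of the graph `G`. -/
structure MultiMinorModel {V ν : Type} (G : SimpleGraph V) (M : MultigraphOn ν) where
  vmap : ν → G.Subgraph
  vmap_connected : ∀ u, (vmap u).Connected
  vmap_disjoint : ∀ u u', u ≠ u' → Disjoint (vmap u).verts (vmap u').verts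
  emap : M.E → GraphPath G
  emap_first : ∀ e, (emap e).first ∈ (vmap (M.ends e).1).verts
  emap_last : ∀ e, (emap e).last ∈ (vmap (M.ends e).2).verts
  emap_internal : ∀ e (x : V) (u : ν), x ∈ (emap e).support → x ∈ (vmap u).verts →
    x = (emap e).first ∨ x = (emap e).last
  emap_disjoint : ∀ e e', e ≠ e' → ∀ x, x ∈ (emap e).support → x ∈ (emap e').support →
      (x = (emap e).first ∨ x = (emap e).last) ∧
      (x = (emap e').first ∨ x = (emap e').last)

section PathSets

variable {V : Type} {G : SimpleGraph V}

/-- `(Rh, Qh)` is a `(w, D)`-intersecting pair of path sets. -/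
def IntersectingPair (Rh Qh : Set (GraphPath G)) (w D : ℕ) : Prop :=
  (∀ r ∈ Rh, w ≤ {q ∈ Qh | ¬ Disjoint r.support q.support}.ncard) ∧
  (∀ q ∈ Qh, D ≤ {r ∈ Rh | ¬ Disjoint r.support q.support}.ncard)

/-- The paths of `Sig` entirely contained in the subgraph `C`. -/
def pathsIn (Sig : Set (GraphPath G)) (C : G.Subgraph) : Set (GraphPath G) :=
  {σ ∈ Sig | σ.InSubgraph C}

/-- The endpoints of the paths of `Sig` entirely contained in the subgraph `C`. -/
def pathEndpoints (Sig : Set (GraphPath G)) (C : G.Subgraph) : Set V :=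
  {v | ∃ σ ∈ pathsIn Sig C, v = σ.first ∨ v = σ.last}

/-- `R` is an `(A, B)`-linkage: a set of pairwise node-disjoint paths connecting
every vertex of `A` to a distinct vertex of `B`. -/
def IsLinkage (A B : Set V) (R : Set (GraphPath G)) : Prop :=
  (R.Pairwise fun p q => Disjoint p.support q.support) ∧
  (∀ p ∈ R, p.first ∈ A ∧ p.last ∈ B) ∧
  (∀ a ∈ A, ∃ p ∈ R, p.first = a) ∧
  (∀ b ∈ B, ∃ p ∈ R, p.last = b)

/-- `G` has the perfect unique linkage property with respect to `(A, B)`, with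
unique linkage `R`: `R` is the unique `(A, B)`-linkage and every vertex of `G`
lies on a path of `R`. -/
def PerfectUniqueLinkage (A B : Set V) (R : Set (GraphPath G)) : Prop :=
  IsLinkage A B R ∧ (∀ R' : Set (GraphPath G), IsLinkage A B R' → R' = R) ∧
  (∀ v : V, ∃ p ∈ R, v ∈ p.support)

/-- An `M`-slicing of the set `Rh` of paths: for each path of `Rh`, a sequence of
`M + 1` vertices appearing on it in order, starting at its first vertex and ending
at its last vertex. -/
structure Slicing (Rh : Set (GraphPath G)) (M : ℕ) where
  seq : GraphPath G → Fin (M + 1) → V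
  first_eq : ∀ p ∈ Rh, seq p 0 = p.first
  last_eq : ∀ p ∈ Rh, seq p (Fin.last M) = p.last
  mem : ∀ p ∈ Rh, ∀ i, seq p i ∈ p.support
  ordered : ∀ p ∈ Rh, ∀ i j : Fin (M + 1), i < j →
    seq p i = seq p j ∨ beforeOn p (seq p i) (seq p j)

/-- `x` lies strictly inside the `i`-th segment of the path `p`, with respect to the
slicing `S`. -/
def Slicing.inSegment {Rh : Set (GraphPath G)} {M : ℕ} (S : Slicing Rh M)
    (p : GraphPath G) (i : Fin M) (x : V) : Prop :=
  beforeOn p (S.seq p i.castSucc) x ∧ beforeOn p x (S.seq p i.succ)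

/-- A pair of families of `κ` node-disjoint paths: the paths of `P` connect the
vertices of `A` to vertices of `B`, the paths of `Q` connect the vertices of `A` to
vertices of `X`. -/
def ValidLinkPair (G : SimpleGraph V) (A B X : Set V) (κ : ℕ)
    (P Q : Fin κ → GraphPath G) : Prop :=
  NodeDisjointFamily P ∧ NodeDisjointFamily Q ∧
  (∀ i, (P i).first ∈ A ∧ (P i).last ∈ B) ∧
  (∀ i, (Q i).first ∈ A ∧ (Q i).last ∈ X) ∧
  (∀ a ∈ A, ∃ i, (P i).first = a) ∧
  (∀ a ∈ A, ∃ i, (Q i).first = a)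

/-- The edge set of the graph `H(P, Q)`, the union of all paths of `P` and `Q`. -/
def LinkPairEdges {κ : ℕ} (P Q : Fin κ → GraphPath G) : Set (Sym2 V) :=
  (⋃ i, (P i).edges) ∪ ⋃ i, (Q i).edges

/-- A pseudo-grid of depth `D` with respect to the path families `P`, `Q` and the
set `X`: `R i` are the (index sets of the) disjoint layers, each of at most `g ^ 2`
paths of `P`; `Q'` is a family of `⌈κ/4⌉` node-disjoint paths, each a subpath of the
`Q`-path `Q (f j)` for a distinct index `f j` outside all layers, with exactly one
endpoint in `X`, such that the paths of `Q'` avoid all `P`-paths outside the layers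
(property P1) and, for every layer, all but at most `2 g ^ 2` paths of `Q'` meet
some path of that layer (property P2). -/
def IsPseudoGrid {G : SimpleGraph V} (X : Set V) (g κ D : ℕ)
    (P Q : Fin κ → GraphPath G) (R : Fin D → Set (Fin κ))
    (Q' : Fin ((κ + 3) / 4) → GraphPath G) (f : Fin ((κ + 3) / 4) → Fin κ) : Prop :=
  (∀ i j, i ≠ j → Disjoint (R i) (R j)) ∧
  (∀ i, (R i).ncard ≤ g ^ 2) ∧
  Function.Injective f ∧
  (∀ j i, f j ∉ R i) ∧
  (∀ j, (Q' j).IsSubpathOf (Q (f j))) ∧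
  (∀ j, Xor' ((Q' j).first ∈ X) ((Q' j).last ∈ X)) ∧
  NodeDisjointFamily Q' ∧
  (∀ j k, (∀ i, k ∉ R i) → Disjoint (Q' j).support (P k).support) ∧
  (∀ i, {j | ∀ k ∈ R i, Disjoint (Q' j).support (P k).support}.ncard ≤ 2 * g ^ 2)

end PathSets

/-- The separator `S_t` associated with the numbering `μ` and the linkage `Rh`:
for each path of `Rh` it contains the first vertex whose `μ`-number (shifted to the
range `{1, …, n}`) is at least `t`, or the last vertex of the path if there is no
such vertex. -/
def sepSet {V : Type} [Fintype V] {G : SimpleGraph V} (Rh : Set (GraphPath G))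
    (μ : V ≃ Fin (Fintype.card V)) (t : ℕ) : Set V :=
  {v | ∃ p ∈ Rh, v ∈ p.support ∧
    ((t ≤ (μ v).val + 1 ∧ ∀ u, beforeOn p u v → (μ u).val + 1 < t) ∨
     (v = p.last ∧ ∀ u ∈ p.support, (μ u).val + 1 < t))}

section CleanupAux

open Classical

variable {V : Type} {G : SimpleGraph V}

/-- Number of paths of `Q` intersecting `r`. -/
noncomputable def degQF (Q : Finset (GraphPath G)) (r : GraphPath G) : ℕ :=
  (Q.filter fun q => ¬ Disjoint r.support q.support).card

/-- Number of paths of `R` intersecting `q`. -/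
noncomputable def degRF (R : Finset (GraphPath G)) (q : GraphPath G) : ℕ :=
  (R.filter fun r => ¬ Disjoint r.support q.support).card

lemma degQF_mono {Q Q' : Finset (GraphPath G)} (h : Q' ⊆ Q) (r : GraphPath G) :
    degQF Q' r ≤ degQF Q r :=
  Finset.card_le_card (Finset.filter_subset_filter _ h)

lemma degRF_mono {R R' : Finset (GraphPath G)} (h : R' ⊆ R) (q : GraphPath G) :
    degRF R' q ≤ degRF R q :=
  Finset.card_le_card (Finset.filter_subset_filter _ h)

lemma degRF_erase_le (R : Finset (GraphPath G)) (r q : GraphPath G) (hr : r ∈ R) :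
    degRF R q ≤ degRF (R.erase r) q +
      (if ¬ Disjoint r.support q.support then 1 else 0) := by
  by_cases h : ¬ Disjoint r.support q.support
  · rw [if_pos h]
    unfold degRF
    have hsub : (R.filter fun x => ¬ Disjoint x.support q.support) ⊆
        insert r ((R.erase r).filter fun x => ¬ Disjoint x.support q.support) := by
      intro x hx
      rw [Finset.mem_filter] at hx
      by_cases hxr : x = r
      · simp [hxr]
      · exact Finset.mem_insert_of_mem
          (Finset.mem_filter.2 ⟨Finset.mem_erase.2 ⟨hxr, hx.1⟩, hx.2⟩)
    calc (R.filter fun x => ¬ Disjoint x.support q.support).card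
        ≤ (insert r ((R.erase r).filter fun x => ¬ Disjoint x.support q.support)).card :=
          Finset.card_le_card hsub
      _ ≤ _ + 1 := Finset.card_insert_le _ _
  · rw [if_neg h]
    have hd : Disjoint r.support q.support := not_not.mp h
    unfold degRF
    refine Nat.le_add_right_of_le (Finset.card_le_card ?_)
    intro x hx
    rw [Finset.mem_filter] at hx
    have hxr : x ≠ r := fun hxe => hx.2 (hxe ▸ hd)
    exact Finset.mem_filter.2 ⟨Finset.mem_erase.2 ⟨hxr, hx.1⟩, hx.2⟩

/-- The key iterative cleanup procedure, by induction on `|R|`. -/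
lemma cleanup_aux (w D : ℕ) :
    ∀ n (R Q : Finset (GraphPath G)), R.card ≤ n → (∀ q ∈ Q, D ≤ degRF R q) →
    ∃ R' Q' : Finset (GraphPath G), R' ⊆ R ∧ Q' ⊆ Q ∧
      (∀ r ∈ R', w ≤ degQF Q' r) ∧ (∀ q ∈ Q', D ≤ degRF R' q) ∧
      D * (Q.card - Q'.card) ≤ w * (R.card - R'.card) +
        ∑ q ∈ Q, (2 * D - degRF R q) ∧
      (∀ r ∈ R, r ∉ R' → degQF Q' r ≤ w) := by
  intro n
  induction n with
  | zero =>
    intro R Q hcard hA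
    exact ⟨R, Q, subset_rfl, subset_rfl,
      fun r hr => absurd hr (by simp [Finset.card_eq_zero.mp (Nat.le_antisymm hcard (Nat.zero_le _))]),
      hA, by simp, fun r hr hr' => absurd hr hr'⟩
  | succ n ih =>
    intro R Q hcard hA
    by_cases hall : ∀ r ∈ R, w ≤ degQF Q r
    · exact ⟨R, Q, subset_rfl, subset_rfl, hall, hA, by simp,
        fun r hr hr' => absurd hr hr'⟩
    · push_neg at hall
      obtain ⟨r, hrR, hrdeg⟩ := hall
      set R₂ := R.erase r with hR₂def
      set Q₂ := Q.filter (fun q => D ≤ degRF R₂ q) with hQ₂def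
      have hQ₂sub : Q₂ ⊆ Q := Finset.filter_subset _ _
      have hA₂ : ∀ q ∈ Q₂, D ≤ degRF R₂ q := fun q hq => (Finset.mem_filter.mp hq).2
      have hRcard : R₂.card = R.card - 1 := Finset.card_erase_of_mem hrR
      have hRpos : 1 ≤ R.card := Finset.card_pos.2 ⟨r, hrR⟩
      have hcard₂ : R₂.card ≤ n := by omega
      obtain ⟨R', Q', hR's, hQ's, h1, h2, hcount, hC⟩ := ih R₂ Q₂ hcard₂ hA₂
      refine ⟨R', Q', hR's.trans (Finset.erase_subset _ _), hQ's.trans hQ₂sub, h1, h2, ?_, ?_⟩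
      · -- the counting inequality
        have hc1 : Q'.card ≤ Q₂.card := Finset.card_le_card hQ's
        have hc2 : Q₂.card ≤ Q.card := Finset.card_le_card hQ₂sub
        have hc3 : R'.card ≤ R₂.card := Finset.card_le_card hR's
        -- removed q's have degree exactly D in R, contributing D each
        have hsdiff : ∑ q ∈ Q \ Q₂, (2 * D - degRF R q) = D * (Q.card - Q₂.card) := by
          have heq : ∀ q ∈ Q \ Q₂, 2 * D - degRF R q = D := by
            intro q hq
            rw [Finset.mem_sdiff] at hq
            have hqQ := hq.1
            have hq2 : ¬ D ≤ degRF R₂ q := by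
              intro hcon
              exact hq.2 (Finset.mem_filter.2 ⟨hqQ, hcon⟩)
            have hle : degRF R q ≤ degRF R₂ q + 1 := by
              have h := degRF_erase_le R r q hrR
              rw [← hR₂def] at h
              split at h <;> omega
            have hAq := hA q hqQ
            omega
          rw [Finset.sum_congr rfl heq, Finset.sum_const, smul_eq_mul,
            Finset.card_sdiff_of_subset hQ₂sub, Nat.mul_comm]
        have hsplit : ∑ q ∈ Q, (2 * D - degRF R q)
            = ∑ q ∈ Q \ Q₂, (2 * D - degRF R q) + ∑ q ∈ Q₂, (2 * D - degRF R q) :=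
          (Finset.sum_sdiff hQ₂sub).symm
        -- potential estimate on Q₂
        have hpot : ∑ q ∈ Q₂, (2 * D - degRF R₂ q)
            ≤ ∑ q ∈ Q₂, (2 * D - degRF R q) + degQF Q r := by
          have hstep : ∑ q ∈ Q₂, (2 * D - degRF R₂ q)
              ≤ ∑ q ∈ Q₂, ((2 * D - degRF R q) +
                  (if ¬ Disjoint r.support q.support then 1 else 0)) := by
            refine Finset.sum_le_sum fun q hq => ?_
            have hle := degRF_erase_le R r q hrR
            rw [← hR₂def] at hle
            have hmono : degRF R₂ q ≤ degRF R q := hR₂def ▸ degRF_mono (Finset.erase_subset r R) q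
            by_cases hx : Disjoint r.support q.support
            · rw [if_neg (not_not_intro hx)] at hle ⊢; omega
            · rw [if_pos hx] at hle ⊢; omega
          rw [Finset.sum_add_distrib] at hstep
          have hcnt : ∑ q ∈ Q₂, (if ¬ Disjoint r.support q.support then 1 else 0)
              = degQF Q₂ r := (Finset.card_filter _ _).symm
          have := degQF_mono hQ₂sub r
          omega
        -- assemble
        have e1 : Q.card - Q'.card = (Q.card - Q₂.card) + (Q₂.card - Q'.card) := by omega
        have e2 : R.card - R'.card = (R₂.card - R'.card) + 1 := by omega
        rw [e1, e2, Nat.mul_add, Nat.mul_add, Nat.mul_one, hsplit, hsdiff]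
        have hd1 : D * (Q₂.card - Q'.card)
            ≤ w * (R₂.card - R'.card) + ∑ q ∈ Q₂, (2 * D - degRF R₂ q) := hcount
        omega
      · intro r' hr'R hr'N
        by_cases h : r' = r
        · subst h
          have := degQF_mono (hQ's.trans hQ₂sub) r'
          omega
        · exact hC r' (Finset.mem_erase.2 ⟨h, hr'R⟩) hr'N

lemma ncard_sep_degQ (Q : Finset (GraphPath G)) (r : GraphPath G) :
    {q ∈ (↑Q : Set (GraphPath G)) | ¬ Disjoint r.support q.support}.ncard = degQF Q r := by
  unfold degQF
  rw [← Set.ncard_coe_finset (Q.filter _)]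
  congr 1
  ext x
  simp

lemma ncard_sep_degR (R : Finset (GraphPath G)) (q : GraphPath G) :
    {r ∈ (↑R : Set (GraphPath G)) | ¬ Disjoint r.support q.support}.ncard = degRF R q := by
  unfold degRF
  rw [← Set.ncard_coe_finset (R.filter _)]
  congr 1
  ext x
  simp

end CleanupAux

/-- Lemma 4.7: let `R, Q` be two sets of node-disjoint paths
such that every path of `Q` intersects at least `2D` distinct paths of `R`, and
`|Q| ≥ 2 |R| w / D`. Then there is a partition `(R', R'')` of `R` and a subset
`Q' ⊆ Q` such that `(R', Q')` is a `(w, D)`-intersecting pair, `|Q'| ≥ |Q| / 2`,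
and every path of `R''` intersects at most `w` paths of `Q'`. -/
theorem intersecting_pair_cleanup {V : Type} [Fintype V] {G : SimpleGraph V}
    (Rh Qh : Set (GraphPath G))
    (hRdisj : Rh.Pairwise fun p q => Disjoint p.support q.support)
    (hQdisj : Qh.Pairwise fun p q => Disjoint p.support q.support)
    (wh Dh : ℕ) (hw : 0 < wh) (hD : 0 < Dh)
    (hQmeets : ∀ q ∈ Qh, 2 * Dh ≤ {r ∈ Rh | ¬ Disjoint r.support q.support}.ncard)
    (hsize : 2 * Rh.ncard * wh ≤ Dh * Qh.ncard) :
    ∃ R' Q' : Set (GraphPath G), R' ⊆ Rh ∧ Q' ⊆ Qh ∧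
      IntersectingPair R' Q' wh Dh ∧
      Qh.ncard ≤ 2 * Q'.ncard ∧
      (∀ r ∈ Rh \ R', {q ∈ Q' | ¬ Disjoint r.support q.support}.ncard ≤ wh) := by
  classical
  -- finiteness of the path families
  have hfirst : ∀ p : GraphPath G, p.first ∈ p.support :=
    fun p => p.walk.start_mem_support
  have hfin : ∀ (S : Set (GraphPath G)),
      (S.Pairwise fun p q => Disjoint p.support q.support) → S.Finite := by
    intro S hS
    refine Set.Finite.of_finite_image (Set.toFinite ((fun p => p.first) '' S)) ?_
    intro p hp q hq hpq
    by_contra hne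
    refine Set.disjoint_left.mp (hS hp hq hne) (hfirst p) ?_
    rw [show p.first = q.first from hpq]
    exact hfirst q
  have hRfin : Rh.Finite := hfin Rh hRdisj
  have hQfin : Qh.Finite := hfin Qh hQdisj
  set RF := hRfin.toFinset with hRFdef
  set QF := hQfin.toFinset with hQFdef
  have hRcoe : (↑RF : Set (GraphPath G)) = Rh := hRfin.coe_toFinset
  have hQcoe : (↑QF : Set (GraphPath G)) = Qh := hQfin.coe_toFinset
  -- translate the hypothesis
  have hmeet : ∀ q ∈ QF, 2 * Dh ≤ degRF RF q := by
    intro q hq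
    have hqQ : q ∈ Qh := by rw [← hQcoe]; exact_mod_cast hq
    have := hQmeets q hqQ
    rwa [← hRcoe, ncard_sep_degR] at this
  have hA : ∀ q ∈ QF, Dh ≤ degRF RF q := fun q hq => le_trans (by omega) (hmeet q hq)
  obtain ⟨R'F, Q'F, hR's, hQ's, h1, h2, hcount, hC⟩ :=
    cleanup_aux wh Dh RF.card RF QF le_rfl hA
  refine ⟨↑R'F, ↑Q'F, ?_, ?_, ⟨?_, ?_⟩, ?_, ?_⟩
  · rw [← hRcoe]; exact_mod_cast hR's
  · rw [← hQcoe]; exact_mod_cast hQ's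
  · intro r hr
    rw [ncard_sep_degQ]
    exact h1 r (by exact_mod_cast hr)
  · intro q hq
    rw [ncard_sep_degR]
    exact h2 q (by exact_mod_cast hq)
  · -- size bound
    have hsum0 : ∑ q ∈ QF, (2 * Dh - degRF RF q) = 0 :=
      Finset.sum_eq_zero fun q hq => Nat.sub_eq_zero_of_le (hmeet q hq)
    rw [hsum0, Nat.add_zero] at hcount
    have hQn : Qh.ncard = QF.card := by rw [← hQcoe, Set.ncard_coe_finset]
    have hRn : Rh.ncard = RF.card := by rw [← hRcoe, Set.ncard_coe_finset]
    have hQ'n : (↑Q'F : Set (GraphPath G)).ncard = Q'F.card := Set.ncard_coe_finset _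
    rw [hQn, hQ'n]
    have hcle : Q'F.card ≤ QF.card := Finset.card_le_card hQ's
    have hstep1 : Dh * (QF.card - Q'F.card) ≤ wh * RF.card :=
      le_trans hcount (Nat.mul_le_mul_left _ (Nat.sub_le _ _))
    have hstep2 : Dh * (2 * (QF.card - Q'F.card)) ≤ Dh * QF.card := by
      calc Dh * (2 * (QF.card - Q'F.card)) = 2 * (Dh * (QF.card - Q'F.card)) := by ring
        _ ≤ 2 * (wh * RF.card) := Nat.mul_le_mul_left _ hstep1
        _ = 2 * RF.card * wh := by ring
        _ ≤ Dh * QF.card := by rw [← hRn, ← hQn]; exact hsize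
    have := Nat.le_of_mul_le_mul_left hstep2 hD
    omega
  · intro r hr
    rw [Set.mem_diff] at hr
    rw [ncard_sep_degQ]
    refine hC r ?_ ?_
    · rw [← hRcoe] at hr; exact_mod_cast hr.1
    · intro hcon; exact hr.2 (by exact_mod_cast hcon)
end

section
/- Let Ĝ be a graph, T a subset of its vertices, and ŵ > 0 an integer. Assume that T is not ŵ-weakly well-linked in Ĝ. Then there is a partition (X, Y) of V(Ĝ) such that the number of edges between X and Y satisfies |E(X,Y)| < min{ŵ, |T∩X|, |T∩Y|}. -/
open SimpleGraph

set_option linter.unusedSectionVars false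

namespace MengerAux

open Finset

variable {V : Type} [DecidableEq V]

/-! ### Flows as finsets of directed edges -/

def outI (F : Finset (V × V)) (v : V) : ℤ := ((F.filter fun p => p.1 = v).card : ℤ)

def inI (F : Finset (V × V)) (v : V) : ℤ := ((F.filter fun p => p.2 = v).card : ℤ)

def exc (F : Finset (V × V)) (v : V) : ℤ := outI F v - inI F v

def ValidF (G : SimpleGraph V) (F : Finset (V × V)) : Prop := ∀ p ∈ F, G.Adj p.1 p.2

def AntisymF (F : Finset (V × V)) : Prop := ∀ p ∈ F, (p.2, p.1) ∉ F

lemma card_filter_erase (F : Finset (V × V)) (q : V × V → Prop) [DecidablePred q]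
    {e : V × V} (h : e ∈ F) :
    (((F.erase e).filter q).card : ℤ) = ((F.filter q).card : ℤ) - (if q e then 1 else 0) := by
  rw [Finset.filter_erase]
  by_cases hq : q e
  · rw [if_pos hq, Finset.card_erase_of_mem (Finset.mem_filter.2 ⟨h, hq⟩)]
    have h1 : 1 ≤ (F.filter q).card := Finset.card_pos.2 ⟨e, Finset.mem_filter.2 ⟨h, hq⟩⟩
    omega
  · rw [if_neg hq, Finset.erase_eq_of_notMem (fun hc => hq (Finset.mem_filter.1 hc).2)]
    ring

lemma card_filter_insert (F : Finset (V × V)) (q : V × V → Prop) [DecidablePred q]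
    {e : V × V} (h : e ∉ F) :
    (((insert e F).filter q).card : ℤ) = ((F.filter q).card : ℤ) + (if q e then 1 else 0) := by
  rw [Finset.filter_insert]
  by_cases hq : q e
  · rw [if_pos hq, if_pos hq, Finset.card_insert_of_notMem (fun hc => h (Finset.mem_filter.1 hc).1)]
    push_cast; ring
  · rw [if_neg hq, if_neg hq]; ring

lemma exc_erase (F : Finset (V × V)) {u v : V} (h : (u, v) ∈ F) (w : V) :
    exc (F.erase (u, v)) w = exc F w - (if w = u then 1 else 0) + (if w = v then 1 else 0) := by
  unfold exc outI inI
  rw [card_filter_erase F (fun p => p.1 = w) h, card_filter_erase F (fun p => p.2 = w) h]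
  have c1 : ((u, v).1 = w) = (w = u) := propext ⟨fun h => h.symm, fun h => h.symm⟩
  have c2 : ((u, v).2 = w) = (w = v) := propext ⟨fun h => h.symm, fun h => h.symm⟩
  simp only [c1, c2]
  ring

lemma exc_insert (F : Finset (V × V)) {u v : V} (h : (u, v) ∉ F) (w : V) :
    exc (insert (u, v) F) w = exc F w + (if w = u then 1 else 0) - (if w = v then 1 else 0) := by
  unfold exc outI inI
  rw [card_filter_insert F (fun p => p.1 = w) h, card_filter_insert F (fun p => p.2 = w) h]
  have c1 : ((u, v).1 = w) = (w = u) := propext ⟨fun h => h.symm, fun h => h.symm⟩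
  have c2 : ((u, v).2 = w) = (w = v) := propext ⟨fun h => h.symm, fun h => h.symm⟩
  simp only [c1, c2]
  ring

/-! ### Augmentation along a residual chain -/

lemma flip_step {G : SimpleGraph V} {F : Finset (V × V)} (hval : ValidF G F)
    (hanti : AntisymF F) {u v : V} (hadj : G.Adj u v) (hnm : (u, v) ∉ F) :
    ∃ F' : Finset (V × V), ValidF G F' ∧ AntisymF F' ∧ (∀ p ∈ F', p ∈ F ∨ p = (u, v)) ∧
      ∀ w, exc F' w = exc F w + (if w = u then 1 else 0) - (if w = v then 1 else 0) := by
  by_cases hvu : (v, u) ∈ F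
  · refine ⟨F.erase (v, u), fun p hp => hval p (Finset.mem_of_mem_erase hp),
      fun p hp hc => hanti p (Finset.mem_of_mem_erase hp) (Finset.mem_of_mem_erase hc),
      fun p hp => Or.inl (Finset.mem_of_mem_erase hp), fun w => ?_⟩
    rw [exc_erase F hvu w]; ring
  · refine ⟨insert (u, v) F, ?_, ?_, ?_, fun w => exc_insert F hnm w⟩
    · intro p hp
      rcases Finset.mem_insert.1 hp with rfl | hp
      · exact hadj
      · exact hval p hp
    · intro p hp hc
      rcases Finset.mem_insert.1 hp with rfl | hp
      · rcases Finset.mem_insert.1 hc with hc | hc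
        · exact hadj.ne (congrArg Prod.fst hc).symm
        · exact hvu hc
      · rcases Finset.mem_insert.1 hc with hc | hc
        · apply hvu
          have : p = (v, u) := by
            have h1 : p.2 = u := congrArg Prod.fst hc
            have h2 : p.1 = v := congrArg Prod.snd hc
            exact Prod.ext h2 h1
          rwa [this] at hp
        · exact hanti p hp hc
    · intro p hp
      rcases Finset.mem_insert.1 hp with rfl | hp
      · exact Or.inr rfl
      · exact Or.inl hp

lemma chain_imp_mem {α : Type} {r r' : α → α → Prop} :
    ∀ {l : List α} {a : α}, List.Chain r a l →
      (∀ x y, x ∈ a :: l → y ∈ l → r x y → r' x y) → List.Chain r' a l := by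
  intro l
  induction l with
  | nil => intro a _ _; exact List.Chain.nil
  | cons b t ih =>
    intro a h hm
    cases h with
    | cons_cons hr hc =>
      exact List.Chain.cons (hm a b (by simp) (by simp) hr)
        (ih hc fun x y hx hy hr => hm x y (List.mem_cons_of_mem _ hx)
          (List.mem_cons_of_mem _ hy) hr)

lemma augment_chain {G : SimpleGraph V} :
    ∀ (l : List V) (a : V) (F : Finset (V × V)), ValidF G F → AntisymF F →
      List.Chain (fun u v => G.Adj u v ∧ (u, v) ∉ F) a l → (a :: l).Nodup →
      ∃ F', ValidF G F' ∧ AntisymF F' ∧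
        ∀ w, exc F' w = exc F w + (if w = a then 1 else 0)
          - (if w = (a :: l).getLast (List.cons_ne_nil a l) then 1 else 0) := by
  intro l
  induction l with
  | nil =>
    intro a F hval hanti _ _
    exact ⟨F, hval, hanti, fun w => by rw [List.getLast_singleton]; ring⟩
  | cons v t ih =>
    intro a F hval hanti hchain hnd
    cases hchain with
    | cons_cons hr hc =>
      obtain ⟨hadj, hmem⟩ := hr
      obtain ⟨F₁, hval₁, hanti₁, hsub₁, hexc₁⟩ := flip_step hval hanti hadj hmem
      have ha : a ∉ v :: t := (List.nodup_cons.1 hnd).1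
      have hc₁ : List.Chain (fun u w => G.Adj u w ∧ (u, w) ∉ F₁) v t := by
        refine chain_imp_mem hc fun x y hx _ hr => ⟨hr.1, fun hin => ?_⟩
        rcases hsub₁ _ hin with h | h
        · exact hr.2 h
        · have hxa : x = a := congrArg Prod.fst h
          exact ha (hxa ▸ hx)
      obtain ⟨F₂, hval₂, hanti₂, hexc₂⟩ := ih v F₁ hval₁ hanti₁ hc₁ hnd.of_cons
      refine ⟨F₂, hval₂, hanti₂, fun w => ?_⟩
      rw [hexc₂ w, hexc₁ w, List.getLast_cons (List.cons_ne_nil v t)]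
      ring

/-! ### Getting a duplicate-free chain -/

lemma not_nodup_split {α : Type} :
    ∀ {L : List α}, ¬ L.Nodup → ∃ (s₁ : List α) (x : α) (s₂ s₃ : List α), L = s₁ ++ x :: s₂ ++ x :: s₃ := by
  intro L
  induction L with
  | nil => intro h; exact absurd List.nodup_nil h
  | cons y t ih =>
    intro h
    by_cases hy : y ∈ t
    · obtain ⟨s, t', rfl⟩ := List.append_of_mem hy
      exact ⟨[], y, s, t', by simp⟩
    · have ht : ¬ t.Nodup := fun hn => h (List.nodup_cons.2 ⟨hy, hn⟩)
      obtain ⟨s₁, x, s₂, s₃, rfl⟩ := ih ht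
      exact ⟨y :: s₁, x, s₂, s₃, by simp⟩

lemma chain'_dedup {α : Type} {r : α → α → Prop} :
    ∀ (n : ℕ) (L : List α), L.length ≤ n → L ≠ [] → List.Chain' r L →
      ∃ L', List.Chain' r L' ∧ L'.Nodup ∧ L' ≠ [] ∧ L'.head? = L.head? ∧
        L'.getLast? = L.getLast? := by
  intro n
  induction n with
  | zero =>
    intro L hL hne _
    cases L with
    | nil => exact absurd rfl hne
    | cons a t => simp at hL
  | succ n ih =>
    intro L hL hne hch
    by_cases hnd : L.Nodup
    · exact ⟨L, hch, hnd, hne, rfl, rfl⟩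
    · obtain ⟨s₁, x, s₂, s₃, rfl⟩ := not_nodup_split hnd
      have hch' : List.Chain' r (s₁ ++ x :: s₃) := by
        rcases List.isChain_append.1 hch with ⟨h1, h2, _⟩
        rcases List.isChain_append.1 h1 with ⟨h11, _, h13⟩
        refine List.isChain_append.2 ⟨h11, h2, fun p hp q hq => ?_⟩
        have hq' : q = x := by simpa [eq_comm] using hq
        rw [hq']
        exact h13 p hp x (by simp)
      have hlen : (s₁ ++ x :: s₃).length ≤ n := by
        simp only [List.length_append, List.length_cons] at hL ⊢
        omega
      have hne' : s₁ ++ x :: s₃ ≠ [] := by simp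
      obtain ⟨L'', a1, a2, a3, a4, a5⟩ := ih (s₁ ++ x :: s₃) hlen hne' hch'
      refine ⟨L'', a1, a2, a3, ?_, ?_⟩
      · rw [a4]; cases s₁ <;> simp
      · rw [a5, List.getLast?_append_of_ne_nil s₁ (List.cons_ne_nil x s₃),
          List.getLast?_append_of_ne_nil _ (List.cons_ne_nil x s₃)]

lemma exists_nodup_chain {α : Type} {r : α → α → Prop} {a b : α}
    (h : Relation.ReflTransGen r a b) :
    ∃ l : List α, List.Chain r a l ∧ (a :: l).Nodup ∧
      (a :: l).getLast (List.cons_ne_nil a l) = b := by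
  obtain ⟨l, hc, hlast⟩ := List.exists_isChain_cons_of_relationReflTransGen h
  have hc' : List.Chain' r (a :: l) := hc
  obtain ⟨L', hch, hnd, hne, hhead, hlast'⟩ :=
    chain'_dedup (a :: l).length (a :: l) le_rfl (List.cons_ne_nil a l) hc'
  match L', hne with
  | x :: l', _ =>
    have hx : x = a := by simpa using hhead
    subst hx
    refine ⟨l', hch, hnd, ?_⟩
    have h1 : (x :: l').getLast? = some ((x :: l').getLast (List.cons_ne_nil x l')) :=
      List.getLast?_eq_getLast _
    have h2 : (x :: l).getLast? = some b := by
      rw [List.getLast?_eq_getLast (List.cons_ne_nil x l), hlast]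
    rw [h1, h2] at hlast'
    exact Option.some_injective _ hlast'

/-! ### Counting: sum of excesses over a set -/

lemma sum_outI (F : Finset (V × V)) (X : Finset V) :
    ∑ v ∈ X, outI F v = ((F.filter fun p => p.1 ∈ X).card : ℤ) := by
  have h := Finset.card_eq_sum_card_fiberwise
    (f := Prod.fst) (s := F.filter fun p => p.1 ∈ X) (t := X)
    (fun p hp => (Finset.mem_filter.1 hp).2)
  rw [h]
  push_cast
  apply Finset.sum_congr rfl
  intro v hv
  unfold outI
  rw [Finset.filter_filter]
  congr 1
  have e : (F.filter fun a => a.1 ∈ X ∧ a.1 = v) = F.filter fun p => p.1 = v := by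
    apply Finset.filter_congr
    intro p _
    constructor
    · rintro ⟨_, h2⟩; exact h2
    · intro h2; exact ⟨by rw [h2]; exact hv, h2⟩
  rw [e]

lemma sum_inI (F : Finset (V × V)) (X : Finset V) :
    ∑ v ∈ X, inI F v = ((F.filter fun p => p.2 ∈ X).card : ℤ) := by
  have h := Finset.card_eq_sum_card_fiberwise
    (f := Prod.snd) (s := F.filter fun p => p.2 ∈ X) (t := X)
    (fun p hp => (Finset.mem_filter.1 hp).2)
  rw [h]
  push_cast
  apply Finset.sum_congr rfl
  intro v hv
  unfold inI
  rw [Finset.filter_filter]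
  congr 1
  have e : (F.filter fun a => a.2 ∈ X ∧ a.2 = v) = F.filter fun p => p.2 = v := by
    apply Finset.filter_congr
    intro p _
    constructor
    · rintro ⟨_, h2⟩; exact h2
    · intro h2; exact ⟨by rw [h2]; exact hv, h2⟩
  rw [e]

lemma sum_exc_eq (F : Finset (V × V)) (X : Finset V) :
    ∑ v ∈ X, exc F v =
      ((F.filter fun p => p.1 ∈ X ∧ p.2 ∉ X).card : ℤ) -
        ((F.filter fun p => p.1 ∉ X ∧ p.2 ∈ X).card : ℤ) := by
  have hsplit1 : ((F.filter fun p => p.1 ∈ X).card : ℤ) =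
      ((F.filter fun p => p.1 ∈ X ∧ p.2 ∈ X).card : ℤ) +
        ((F.filter fun p => p.1 ∈ X ∧ p.2 ∉ X).card : ℤ) := by
    have h := Finset.card_filter_add_card_filter_not
      (s := F.filter fun p => p.1 ∈ X) (p := fun p => p.2 ∈ X)
    rw [Finset.filter_filter, Finset.filter_filter] at h
    push_cast [← h]
    ring
  have hsplit2 : ((F.filter fun p => p.2 ∈ X).card : ℤ) =
      ((F.filter fun p => p.1 ∈ X ∧ p.2 ∈ X).card : ℤ) +
        ((F.filter fun p => p.1 ∉ X ∧ p.2 ∈ X).card : ℤ) := by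
    have h := Finset.card_filter_add_card_filter_not
      (s := F.filter fun p => p.2 ∈ X) (p := fun p => p.1 ∈ X)
    rw [Finset.filter_filter, Finset.filter_filter] at h
    have e1 : (F.filter fun p => p.2 ∈ X ∧ p.1 ∈ X) = F.filter fun p => p.1 ∈ X ∧ p.2 ∈ X :=
      Finset.filter_congr fun p _ => and_comm
    have e2 : (F.filter fun p => p.2 ∈ X ∧ ¬ p.1 ∈ X) = F.filter fun p => p.1 ∉ X ∧ p.2 ∈ X :=
      Finset.filter_congr fun p _ => and_comm
    rw [e1, e2] at h
    push_cast [← h]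
    ring
  calc ∑ v ∈ X, exc F v = ∑ v ∈ X, outI F v - ∑ v ∈ X, inI F v := by
        unfold exc; rw [Finset.sum_sub_distrib]
    _ = _ := by rw [sum_outI, sum_inI, hsplit1, hsplit2]; ring

/-! ### Flow existence via augmenting paths -/

variable [Fintype V]

def dcut (G : SimpleGraph V) [DecidableRel G.Adj] (X : Finset V) : Finset (V × V) :=
  Finset.univ.filter fun p => G.Adj p.1 p.2 ∧ p.1 ∈ X ∧ p.2 ∉ X

def IsFlowF (G : SimpleGraph V) (A B : Finset V) (F : Finset (V × V)) (k : ℕ) : Prop :=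
  ValidF G F ∧ AntisymF F ∧ (∀ v, v ∉ A → v ∉ B → exc F v = 0) ∧
    (∀ v, v ∉ B → 0 ≤ exc F v) ∧ (∑ v ∈ A, exc F v = (k : ℤ))

lemma exists_flow (G : SimpleGraph V) [DecidableRel G.Adj] (A B : Finset V)
    (hAB : ∀ a ∈ A, a ∉ B) (k : ℕ)
    (hcut : ∀ X : Finset V, A ⊆ X → (∀ b ∈ B, b ∉ X) → k ≤ (dcut G X).card) :
    ∀ j, j ≤ k → ∃ F, IsFlowF G A B F j := by
  classical
  intro j
  induction j with
  | zero =>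
    intro _
    refine ⟨∅, fun p hp => absurd hp (Finset.notMem_empty p), fun p hp => absurd hp (Finset.notMem_empty p), ?_, ?_, ?_⟩
    · intro v _ _; simp [exc, outI, inI]
    · intro v _; simp [exc, outI, inI]
    · simp [exc, outI, inI]
  | succ j ih =>
    intro hjk
    obtain ⟨F, hval, hanti, hcons, hnn, hsum⟩ := ih (Nat.le_of_succ_le hjk)
    by_cases hreach : ∃ b ∈ B, ∃ a ∈ A,
        Relation.ReflTransGen (fun u v => G.Adj u v ∧ (u, v) ∉ F) a b
    · obtain ⟨b, hb, a, ha, hab⟩ := hreach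
      obtain ⟨l, hchain, hnd, hlast⟩ := exists_nodup_chain hab
      obtain ⟨F', hval', hanti', hexc'⟩ := augment_chain l a F hval hanti hchain hnd
      rw [hlast] at hexc'
      have hba : b ∉ A := fun hbA => hAB b hbA hb
      refine ⟨F', hval', hanti', ?_, ?_, ?_⟩
      · intro v hvA hvB
        rw [hexc' v, hcons v hvA hvB,
          if_neg (fun h => hvA (by rw [h]; exact ha)), if_neg (fun h => hvB (by rw [h]; exact hb))]
        ring
      · intro v hvB
        have hvb : v ≠ b := fun h => hvB (by rw [h]; exact hb)
        rw [hexc' v, if_neg hvb]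
        have h1 := hnn v hvB
        by_cases h2 : v = a
        · subst h2; simp; omega
        · simp [h2]; omega
      · have : ∀ v ∈ A, exc F' v = exc F v + (if v = a then 1 else 0) - (if v = b then 1 else 0) :=
          fun v _ => hexc' v
        rw [Finset.sum_congr rfl this]
        rw [Finset.sum_sub_distrib, Finset.sum_add_distrib, hsum,
          Finset.sum_ite_eq' A a (fun _ => (1 : ℤ)), Finset.sum_ite_eq' A b (fun _ => (1 : ℤ)),
          if_pos ha, if_neg hba]
        push_cast
        ring
    · exfalso
      push_neg at hreach
      set X : Finset V := Finset.univ.filter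
        (fun v => ∃ a ∈ A, Relation.ReflTransGen (fun u v => G.Adj u v ∧ (u, v) ∉ F) a v)
        with hX
      have hAX : A ⊆ X := fun a ha =>
        Finset.mem_filter.2 ⟨Finset.mem_univ _, a, ha, Relation.ReflTransGen.refl⟩
      have hBX : ∀ b ∈ B, b ∉ X := by
        intro b hb hbX
        obtain ⟨-, a, ha, hr⟩ := Finset.mem_filter.1 hbX
        exact hreach b hb a ha hr
      have hclosed : ∀ u v', u ∈ X → G.Adj u v' → (u, v') ∉ F → v' ∈ X := by
        intro u v' hu hadj hnm
        obtain ⟨-, a, ha, hr⟩ := Finset.mem_filter.1 hu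
        exact Finset.mem_filter.2 ⟨Finset.mem_univ _, a, ha, hr.tail ⟨hadj, hnm⟩⟩
      have hd : dcut G X = F.filter fun p => p.1 ∈ X ∧ p.2 ∉ X := by
        ext p
        simp only [dcut, Finset.mem_filter, Finset.mem_univ, true_and]
        constructor
        · rintro ⟨hadj, h1, h2⟩
          refine ⟨?_, h1, h2⟩
          by_contra hnm
          have : ((p.1, p.2) : V × V) ∉ F := by simpa using hnm
          exact h2 (hclosed p.1 p.2 h1 hadj this)
        · rintro ⟨hp, h1, h2⟩
          exact ⟨hval p hp, h1, h2⟩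
      have hempty : (F.filter fun p => p.1 ∉ X ∧ p.2 ∈ X) = ∅ := by
        rw [Finset.filter_eq_empty_iff]
        rintro p hp ⟨h1, h2⟩
        have hrev : ((p.2, p.1) : V × V) ∉ F := hanti p hp
        exact h1 (hclosed p.2 p.1 h2 (hval p hp).symm hrev)
      have hsumX : ∑ v ∈ X, exc F v = (j : ℤ) := by
        rw [← hsum]
        symm
        apply Finset.sum_subset hAX
        intro v hvX hvA
        exact hcons v hvA (fun hvB => hBX v hvB hvX)
      have hcard : ((dcut G X).card : ℤ) = (j : ℤ) := by
        rw [hd, ← hsumX, sum_exc_eq F X, hempty]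
        simp
      have hk := hcut X hAX hBX
      have : (dcut G X).card = j := by exact_mod_cast hcard
      omega

/-! ### Extracting edge-disjoint paths from a flow -/

lemma chain_pairs_mem {α : Type} {r : α → α → Prop} :
    ∀ {l : List α} {a : α}, List.Chain r a l → ∀ p ∈ (a :: l).zip l, r p.1 p.2 := by
  intro l
  induction l with
  | nil => intro a _ p hp; simp at hp
  | cons v t ih =>
    intro a h p hp
    rw [List.zip_cons_cons] at hp
    cases h with
    | cons_cons h1 hc =>
      rcases List.mem_cons.1 hp with rfl | hp'
      · exact h1
      · exact ih hc p hp'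

lemma exists_trail (G : SimpleGraph V) (B : Finset V) :
    ∀ (n : ℕ) (F : Finset (V × V)), F.card ≤ n → ValidF G F → AntisymF F →
      (∀ v, v ∉ B → 0 ≤ exc F v) → ∀ a, a ∉ B → 1 ≤ exc F a →
      ∃ b ∈ B, ∃ l : List V,
        List.Chain (fun u v => (u, v) ∈ F) a l ∧
        (a :: l).getLast (List.cons_ne_nil a l) = b ∧
        ((a :: l).zip l).Nodup := by
  intro n
  induction n with
  | zero =>
    intro F hn _ _ _ a _ hexc
    have hF : F = ∅ := Finset.card_eq_zero.1 (Nat.le_antisymm hn (Nat.zero_le _))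
    subst hF
    simp [exc, outI, inI] at hexc
  | succ n ih =>
    intro F hn hval hanti hnn a haB hexc
    have hin : (0:ℤ) ≤ inI F a := Int.ofNat_nonneg _
    have hout : 1 ≤ outI F a := by unfold exc at hexc; omega
    have houtc : 1 ≤ (F.filter fun p => p.1 = a).card := by
      unfold outI at hout; exact_mod_cast hout
    obtain ⟨p0, hp0⟩ := Finset.card_pos.1 houtc
    obtain ⟨hp0F, hp0a⟩ := Finset.mem_filter.1 hp0
    have hp : (a, p0.2) ∈ F := by
      have he : p0 = (a, p0.2) := Prod.ext hp0a rfl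
      rwa [he] at hp0F
    set v := p0.2 with hv
    by_cases hvB : v ∈ B
    · refine ⟨v, hvB, [v], List.Chain.cons hp List.Chain.nil, by simp, by simp⟩
    · have hadj := hval (a, v) hp
      have hav : a ≠ v := hadj.ne
      have hcard : (F.erase (a, v)).card ≤ n := by
        rw [Finset.card_erase_of_mem hp]
        omega
      have hval₁ : ValidF G (F.erase (a, v)) := fun q hq => hval q (Finset.mem_of_mem_erase hq)
      have hanti₁ : AntisymF (F.erase (a, v)) := fun q hq hcq =>
        hanti q (Finset.mem_of_mem_erase hq) (Finset.mem_of_mem_erase hcq)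
      have hexc₁ : ∀ w, exc (F.erase (a, v)) w
          = exc F w - (if w = a then 1 else 0) + (if w = v then 1 else 0) := exc_erase F hp
      have hnn₁ : ∀ w, w ∉ B → 0 ≤ exc (F.erase (a, v)) w := by
        intro w hwB
        rw [hexc₁ w]
        have h1 := hnn w hwB
        by_cases h2 : w = a
        · subst h2; rw [if_pos rfl, if_neg (fun hc => hav hc)]
          omega
        · rw [if_neg h2]
          by_cases h3 : w = v
          · rw [if_pos h3]; omega
          · rw [if_neg h3]; omega
      have hexcv : 1 ≤ exc (F.erase (a, v)) v := by
        rw [hexc₁ v, if_neg (fun hc => hav hc.symm), if_pos rfl]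
        have := hnn v hvB
        omega
      obtain ⟨b, hbB, l, hchain₁, hlast₁, hnd₁⟩ := ih (F.erase (a, v)) hcard hval₁ hanti₁ hnn₁ v hvB hexcv
      refine ⟨b, hbB, v :: l, ?_, ?_, ?_⟩
      · exact List.Chain.cons hp (List.IsChain.imp (fun ⦃x y⦄ hxy => Finset.mem_of_mem_erase hxy) hchain₁)
      · rw [List.getLast_cons (List.cons_ne_nil v l)]
        exact hlast₁
      · rw [List.zip_cons_cons]
        refine List.nodup_cons.2 ⟨?_, hnd₁⟩
        intro hmem
        exact Finset.notMem_erase (a, v) F (chain_pairs_mem hchain₁ (a, v) hmem)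

lemma chain_mem_strengthen {α : Type} [DecidableEq α] :
    ∀ {l : List α} {a : α} {F F' : Finset (α × α)},
      List.Chain (fun u v => (u, v) ∈ F) a l →
      (∀ p ∈ (a :: l).zip l, p ∈ F → p ∈ F') →
      List.Chain (fun u v => (u, v) ∈ F') a l := by
  intro l
  induction l with
  | nil => intro a F F' _ _; exact List.Chain.nil
  | cons v t ih =>
    intro a F F' h hm
    cases h with
    | cons_cons h1 hc =>
      refine List.Chain.cons
        (hm (a, v) (by rw [List.zip_cons_cons]; exact List.mem_cons_self) h1) ?_
      exact ih hc fun p hp hpF =>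
        hm p (by rw [List.zip_cons_cons]; exact List.mem_cons_of_mem _ hp) hpF

lemma remove_trail :
    ∀ (l : List V) (a : V) (F : Finset (V × V)),
      List.Chain (fun u v => (u, v) ∈ F) a l →
      ((a :: l).zip l).Nodup →
      ∃ F' : Finset (V × V), F' ⊆ F ∧ (∀ p ∈ (a :: l).zip l, p ∉ F') ∧
        ∀ w, exc F' w = exc F w - (if w = a then 1 else 0)
          + (if w = (a :: l).getLast (List.cons_ne_nil a l) then 1 else 0) := by
  intro l
  induction l with
  | nil =>
    intro a F _ _
    exact ⟨F, Finset.Subset.refl F, by simp, fun w => by rw [List.getLast_singleton]; ring⟩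
  | cons v t ih =>
    intro a F hchain hnd
    cases hchain with
    | cons_cons h1 hc =>
      rw [List.zip_cons_cons] at hnd
      have hna : (a, v) ∉ (v :: t).zip t := (List.nodup_cons.1 hnd).1
      have hc₁ : List.Chain (fun u w => (u, w) ∈ F.erase (a, v)) v t := by
        refine chain_mem_strengthen hc fun p hp hpF => Finset.mem_erase.2 ⟨?_, hpF⟩
        intro hpe
        exact hna (hpe ▸ hp)
      obtain ⟨F', hsub, hout, hexc'⟩ := ih v (F.erase (a, v)) hc₁ (List.nodup_cons.1 hnd).2
      refine ⟨F', fun q hq => Finset.mem_of_mem_erase (hsub hq), ?_, ?_⟩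
      · intro p hp
        rw [List.zip_cons_cons] at hp
        rcases List.mem_cons.1 hp with rfl | hp'
        · intro hmem
          exact Finset.notMem_erase (a, v) F (hsub hmem)
        · exact hout p hp'
      · intro w
        rw [hexc' w, exc_erase F h1 w, List.getLast_cons (List.cons_ne_nil v t)]
        ring

lemma walk_of_chain (G : SimpleGraph V) :
    ∀ (l : List V) (a b : V) (F : Finset (V × V)), ValidF G F →
      List.Chain (fun u v => (u, v) ∈ F) a l →
      (a :: l).getLast (List.cons_ne_nil a l) = b →
      ∃ w : G.Walk a b, ∀ e ∈ w.edges, ∃ p ∈ (a :: l).zip l, e = s(p.1, p.2) := by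
  intro l
  induction l with
  | nil =>
    intro a b F _ _ hlast
    rw [List.getLast_singleton] at hlast
    subst hlast
    exact ⟨SimpleGraph.Walk.nil, by simp⟩
  | cons v t ih =>
    intro a b F hval hchain hlast
    cases hchain with
    | cons_cons h1 hc =>
      have hadj : G.Adj a v := hval (a, v) h1
      rw [List.getLast_cons (List.cons_ne_nil v t)] at hlast
      obtain ⟨w', hw'⟩ := ih v b F hval hc hlast
      refine ⟨SimpleGraph.Walk.cons hadj w', ?_⟩
      intro e he
      rw [SimpleGraph.Walk.edges_cons] at he
      rcases List.mem_cons.1 he with rfl | he'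
      · exact ⟨(a, v), by rw [List.zip_cons_cons]; exact List.mem_cons_self, rfl⟩
      · obtain ⟨p, hp, hep⟩ := hw' e he'
        exact ⟨p, by rw [List.zip_cons_cons]; exact List.mem_cons_of_mem _ hp, hep⟩

lemma flow_to_paths (G : SimpleGraph V) (A B : Finset V) (hAB : ∀ a ∈ A, a ∉ B) :
    ∀ (k : ℕ) (F : Finset (V × V)), IsFlowF G A B F k →
      ∃ P : Fin k → GraphPath G,
        (∀ i j, i ≠ j → Disjoint (P i).edges (P j).edges) ∧
        (∀ j, (P j).first ∈ A ∧ (P j).last ∈ B) ∧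
        (∀ j, ∀ e ∈ (P j).walk.edges, ∃ p ∈ F, e = s(p.1, p.2)) := by
  intro k
  induction k with
  | zero =>
    intro F _
    exact ⟨fun j => j.elim0, fun i => i.elim0, fun j => j.elim0, fun j => j.elim0⟩
  | succ k ih =>
    intro F hF
    obtain ⟨hval, hanti, hcons, hnn, hsum⟩ := hF
    have hex : ∃ a ∈ A, 1 ≤ exc F a := by
      by_contra hco
      push_neg at hco
      have h1 : ∑ v ∈ A, exc F v ≤ 0 :=
        Finset.sum_nonpos fun v hv => by have := hco v hv; omega
      rw [hsum] at h1
      have h2 : (0:ℤ) < ((k+1 : ℕ) : ℤ) := by exact_mod_cast Nat.succ_pos k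
      omega
    obtain ⟨a, haA, hexca⟩ := hex
    obtain ⟨b, hbB, l, hchain, hlast, hndp⟩ :=
      exists_trail G B F.card F le_rfl hval hanti hnn a (hAB a haA) hexca
    obtain ⟨F', hsub, hout, hexc'⟩ := remove_trail l a F hchain hndp
    rw [hlast] at hexc'
    have hpairsF : ∀ p ∈ (a :: l).zip l, p ∈ F := chain_pairs_mem hchain
    have hba : b ∉ A := fun hbA => hAB b hbA hbB
    have hF' : IsFlowF G A B F' k := by
      refine ⟨fun q hq => hval q (hsub hq), fun q hq hcq => hanti q (hsub hq) (hsub hcq),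
        ?_, ?_, ?_⟩
      · intro v hvA hvB
        rw [hexc' v, hcons v hvA hvB, if_neg (fun h => hvA (by rw [h]; exact haA)),
          if_neg (fun h => hvB (by rw [h]; exact hbB))]
        ring
      · intro v hvB
        have hvb : v ≠ b := fun h => hvB (by rw [h]; exact hbB)
        rw [hexc' v, if_neg hvb]
        have h1 := hnn v hvB
        by_cases h2 : v = a
        · subst h2; rw [if_pos rfl]; omega
        · rw [if_neg h2]; omega
      · have he : ∀ v ∈ A, exc F' v
            = exc F v - (if v = a then 1 else 0) + (if v = b then 1 else 0) :=
          fun v _ => hexc' v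
        rw [Finset.sum_congr rfl he, Finset.sum_add_distrib, Finset.sum_sub_distrib, hsum,
          Finset.sum_ite_eq' A a (fun _ => (1:ℤ)), Finset.sum_ite_eq' A b (fun _ => (1:ℤ)),
          if_pos haA, if_neg hba]
        push_cast
        ring
    obtain ⟨P', hdis', hends', hedges'⟩ := ih F' hF'
    obtain ⟨w, hw⟩ := walk_of_chain G l a b F hval hchain hlast
    refine ⟨fun i => if h : i = 0 then ⟨a, b, w.bypass, w.bypass_isPath⟩ else P' (i.pred h),
      ?_, ?_, ?_⟩
    · have hmain : ∀ (j : Fin (k+1)) (hj : j ≠ 0),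
          Disjoint (GraphPath.edges (G := G) ⟨a, b, w.bypass, w.bypass_isPath⟩)
            (P' (j.pred hj)).edges := by
        intro j hj
        rw [Set.disjoint_left]
        intro e he₀ heJ
        obtain ⟨p, hpL, hpe⟩ := hw e (w.edges_bypass_subset he₀)
        obtain ⟨q, hqF', hqe⟩ := hedges' (j.pred hj) e heJ
        have hqp : q = p ∨ q = (p.2, p.1) := by
          rw [hpe] at hqe
          rcases Sym2.eq_iff.1 hqe with ⟨h1, h2⟩ | ⟨h1, h2⟩
          · left; exact Prod.ext h1.symm h2.symm
          · right; exact Prod.ext h2.symm h1.symm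
        rcases hqp with rfl | rfl
        · exact hout q hpL hqF'
        · exact hanti p (hpairsF p hpL) (hsub hqF')
      intro i j hij
      by_cases hi : i = 0 <;> by_cases hj : j = 0
      · exact absurd (hi.trans hj.symm) hij
      · simp only [dif_pos hi, dif_neg hj]
        exact hmain j hj
      · simp only [dif_pos hj, dif_neg hi]
        exact (hmain i hi).symm
      · simp only [dif_neg hi, dif_neg hj]
        exact hdis' _ _ fun h => hij (Fin.pred_inj.1 h)
    · intro j
      by_cases hj : j = 0
      · simp only [dif_pos hj]
        exact ⟨haA, hbB⟩
      · simp only [dif_neg hj]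
        exact hends' (j.pred hj)
    · intro j e he
      by_cases hj : j = 0
      · subst hj
        obtain ⟨p, hpL, hpe⟩ := hw e (w.edges_bypass_subset he)
        exact ⟨p, hpairsF p hpL, hpe⟩
      · have he2 : e ∈ (P' (j.pred hj)).walk.edges := by
          have hrw : (if h : j = 0 then (⟨a, b, w.bypass, w.bypass_isPath⟩ : GraphPath G)
              else P' (j.pred h)) = P' (j.pred hj) := dif_neg hj
          rw [← hrw]
          exact he
        obtain ⟨q, hq, hqe⟩ := hedges' (j.pred hj) e he2
        exact ⟨q, hsub hq, hqe⟩

lemma edge_menger (G : SimpleGraph V) [DecidableRel G.Adj] (A B : Finset V)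
    (hAB : ∀ a ∈ A, a ∉ B) (k : ℕ)
    (hcut : ∀ X : Finset V, A ⊆ X → (∀ b ∈ B, b ∉ X) → k ≤ (dcut G X).card) :
    ∃ P : Fin k → GraphPath G, (∀ i j, i ≠ j → Disjoint (P i).edges (P j).edges) ∧
      ∀ j, (P j).first ∈ A ∧ (P j).last ∈ B := by
  obtain ⟨F, hF⟩ := exists_flow G A B hAB k hcut k le_rfl
  obtain ⟨P, h1, h2, _⟩ := flow_to_paths G A B hAB k F hF
  exact ⟨P, h1, h2⟩

end MengerAux

/-- Observation 4.9: if `T` is not `w`-weakly well-linked in the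
graph `G`, then there is a partition `(X, Y)` of `V(G)` such that
`|E(X, Y)| < min {w, |T ∩ X|, |T ∩ Y|}`. -/
theorem cut_from_not_weakly_well_linked {V : Type} [Fintype V] (G : SimpleGraph V)
    (T : Set V) (wh : ℕ) (hw : 0 < wh)
    (hnot : ¬ WeaklyWellLinkedIn G ⊤ T wh) :
    ∃ X Y : Set V, X ∪ Y = Set.univ ∧ Disjoint X Y ∧
      (crossEdges G X Y).ncard < min wh (min (T ∩ X).ncard (T ∩ Y).ncard) := by
  classical
  rw [WeaklyWellLinkedIn] at hnot
  push_neg at hnot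
  obtain ⟨T', T'', hT'T, hT''T, hdisj, hfin, hfin', hnop⟩ := hnot
  set k := min (min T'.ncard T''.ncard) wh with hk
  set A := hfin.toFinset with hA
  set B := hfin'.toFinset with hB
  have hAB : ∀ a ∈ A, a ∉ B := by
    intro a ha hb
    rw [hA, Set.Finite.mem_toFinset] at ha
    rw [hB, Set.Finite.mem_toFinset] at hb
    exact Set.disjoint_left.1 hdisj ha hb
  by_cases hcut : ∀ X : Finset V, A ⊆ X → (∀ b ∈ B, b ∉ X) → k ≤ (MengerAux.dcut G X).card
  · exfalso
    obtain ⟨P, hdis, hend⟩ := MengerAux.edge_menger G A B hAB k hcut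
    obtain ⟨j, hj⟩ := hnop P
      (fun j => ⟨by rw [SimpleGraph.Subgraph.verts_top]; exact Set.subset_univ _,
        fun e he => by
          rw [SimpleGraph.Subgraph.edgeSet_top]
          exact (P j).walk.edges_subset_edgeSet he⟩)
      hdis
    have h1 : (P j).first ∈ T' := by
      rw [← Set.Finite.mem_toFinset hfin]
      exact (hend j).1
    have h2 : (P j).last ∈ T'' := by
      rw [← Set.Finite.mem_toFinset hfin']
      exact (hend j).2
    exact hj h1 h2
  · push_neg at hcut
    obtain ⟨Xf, hAX, hBX, hlt⟩ := hcut
    refine ⟨↑Xf, (↑Xf : Set V)ᶜ, Set.union_compl_self _, disjoint_compl_right, ?_⟩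
    have hcross : crossEdges G ↑Xf (↑Xf : Set V)ᶜ
        = ↑((MengerAux.dcut G Xf).image fun p => s(p.1, p.2)) := by
      ext e
      constructor
      · rintro ⟨hE, x, hx, y, hy, rfl⟩
        refine Finset.mem_coe.2 (Finset.mem_image.2 ⟨(x, y), ?_, rfl⟩)
        rw [MengerAux.dcut, Finset.mem_filter]
        exact ⟨Finset.mem_univ _, (SimpleGraph.mem_edgeSet G).1 hE, Finset.mem_coe.1 hx,
          fun hyX => hy (Finset.mem_coe.2 hyX)⟩
      · intro he
        obtain ⟨p, hp, hpe⟩ := Finset.mem_image.1 (Finset.mem_coe.1 he)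
        rw [MengerAux.dcut, Finset.mem_filter] at hp
        obtain ⟨-, hadj, hx, hy⟩ := hp
        exact ⟨hpe ▸ (SimpleGraph.mem_edgeSet G).2 hadj, p.1, Finset.mem_coe.2 hx, p.2,
          fun hyX => hy (Finset.mem_coe.1 hyX), hpe.symm⟩
    rw [hcross, Set.ncard_coe_finset]
    have hinj : Set.InjOn (fun p : V × V => s(p.1, p.2)) ↑(MengerAux.dcut G Xf) := by
      rintro ⟨x, y⟩ hp ⟨x', y'⟩ hq heq
      rw [Finset.mem_coe, MengerAux.dcut, Finset.mem_filter] at hp hq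
      obtain ⟨-, -, hpx, hpy⟩ := hp
      obtain ⟨-, -, hqx, hqy⟩ := hq
      rcases Sym2.eq_iff.1 heq with ⟨h1, h2⟩ | ⟨h1, h2⟩
      · exact Prod.ext h1 h2
      · exfalso
        exact hqy (h1 ▸ hpx)
    rw [Finset.card_image_of_injOn hinj]
    have hkle : k ≤ min wh (min (T ∩ ↑Xf).ncard (T ∩ (↑Xf : Set V)ᶜ).ncard) := by
      refine le_min (min_le_right _ _) (le_min ?_ ?_)
      · refine le_trans (le_trans (min_le_left _ _) (min_le_left _ _)) ?_
        apply Set.ncard_le_ncard _ (Set.toFinite _)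
        intro x hx
        refine ⟨hT'T hx, ?_⟩
        rw [← Set.Finite.mem_toFinset hfin] at hx
        exact Finset.mem_coe.2 (hAX hx)
      · refine le_trans (le_trans (min_le_left _ _) (min_le_right _ _)) ?_
        apply Set.ncard_le_ncard _ (Set.toFinite _)
        intro x hx
        refine ⟨hT''T hx, ?_⟩
        rw [← Set.Finite.mem_toFinset hfin'] at hx
        exact fun hxX => hBX x hx (Finset.mem_coe.1 hxX)
    exact lt_of_lt_of_le hlt hkle
end

section
/- Let D̂, N̂, M̂, ŵ be non-negative integers such that (i) N̂ ≥ 3ŵ; (ii) D̂^2 ≥ 4·N̂·ŵ; and (iii) M̂·D̂ ≥ 2·N̂·ŵ. Let S_1, …, S_{M̂} be subsets of {1,…,N̂}, where for each 1 ≤ i ≤ M̂, |S_i| ≥ D̂. Then there are ŵ indices 1 ≤ i_1 < i_2 < ⋯ < i_{ŵ} ≤ M̂ such that for all 1 ≤ j < ŵ, |S_{i_j} ∩ S_{i_{j+1}}| ≥ ŵ. -/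
open SimpleGraph

section Aux

variable {Mh Nh : ℕ}

private def chainRel (wh : ℕ) (S : Fin Mh → Finset (Fin Nh)) (a b : Fin Mh) : Prop :=
  a < b ∧ wh ≤ (S a ∩ S b).card

private def rnk (wh : ℕ) (S : Fin Mh → Finset (Fin Nh)) (i : Fin Mh) : ℕ :=
  1 + ((Finset.univ.filter fun j : Fin Mh => j < i ∧ wh ≤ ((S j) ∩ (S i)).card).attach.sup
        fun j => rnk wh S j.1)
termination_by i.val
decreasing_by
  have := j.2
  simp only [Finset.mem_filter] at this
  exact this.2.1

private lemma rnk_pos (wh : ℕ) (S : Fin Mh → Finset (Fin Nh)) (i : Fin Mh) :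
    1 ≤ rnk wh S i := by
  rw [rnk]; omega

private lemma rnk_lt (wh : ℕ) (S : Fin Mh → Finset (Fin Nh)) {j i : Fin Mh}
    (h1 : j < i) (h2 : wh ≤ (S j ∩ S i).card) : rnk wh S j < rnk wh S i := by
  conv_rhs => rw [rnk]
  have hj : j ∈ Finset.univ.filter fun j : Fin Mh => j < i ∧ wh ≤ ((S j) ∩ (S i)).card := by
    simp [h1, h2]
  have := Finset.le_sup (f := fun j : {x // x ∈ Finset.univ.filter fun j : Fin Mh => j < i ∧ wh ≤ ((S j) ∩ (S i)).card} => rnk wh S j.1)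
    (Finset.mem_attach _ ⟨j, hj⟩)
  dsimp only at this
  omega

private lemma rnk_chain (wh : ℕ) (S : Fin Mh → Finset (Fin Nh)) (i : Fin Mh) :
    ∃ l : List (Fin Mh), l.Chain' (chainRel wh S) ∧ l.getLast? = some i ∧
      l.length = rnk wh S i := by
  suffices H : ∀ n (i : Fin Mh), i.val = n → ∃ l : List (Fin Mh),
      l.Chain' (chainRel wh S) ∧ l.getLast? = some i ∧ l.length = rnk wh S i from
    H i.val i rfl
  intro n
  induction n using Nat.strong_induction_on with
  | _ n ih =>
    intro i hi
    rw [rnk]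
    set F := (Finset.univ.filter fun j : Fin Mh => j < i ∧ wh ≤ ((S j) ∩ (S i)).card) with hF
    rcases F.eq_empty_or_nonempty with hFe | hFne
    · refine ⟨[i], ?_, rfl, ?_⟩
      · exact List.isChain_singleton i
      · rw [hFe]; simp
    · obtain ⟨j, hjm, hje⟩ := Finset.exists_mem_eq_sup F.attach (hFne.attach)
        (fun j => rnk wh S j.1)
      obtain ⟨hji, hjw⟩ := (Finset.mem_filter.mp j.2).2
      obtain ⟨l, hl1, hl2, hl3⟩ := ih j.1.val (by subst hi; exact hji) j.1 rfl
      refine ⟨l ++ [i], ?_, ?_, ?_⟩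
      · show List.IsChain _ _
        rw [List.isChain_append]
        refine ⟨hl1, by simp, ?_⟩
        intro x hx y hy
        rw [hl2] at hx
        simp at hx hy
        subst hx; subst hy
        exact ⟨hji, hjw⟩
      · simp
      · simp [hl3, ← hje]; omega

end Aux

private lemma class_bound {Mh Nh : ℕ} (Dh w' : ℕ) (hN : 1 ≤ Nh)
    (h2 : 4 * Nh * (w' + 1) ≤ Dh ^ 2)
    (S : Fin Mh → Finset (Fin Nh)) (hS : ∀ i, Dh ≤ (S i).card)
    (A : Finset (Fin Mh))
    (hA : ∀ i ∈ A, ∀ j ∈ A, i ≠ j → (S i ∩ S j).card ≤ w') :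
    A.card * Dh ≤ 2 * Nh := by
  by_contra hcon
  push_neg at hcon
  set K := A.card with hK
  set d : Fin Nh → ℕ := fun x => (A.filter fun i => x ∈ S i).card with hd
  set T := ∑ x : Fin Nh, d x with hT
  set U := ∑ x : Fin Nh, d x ^ 2 with hU
  have hsingle : ∀ s : Finset (Fin Nh), ∑ x : Fin Nh, (if x ∈ s then 1 else 0) = s.card := by
    intro s
    simp [Finset.sum_ite_mem]
  have hTf : T = ∑ i ∈ A, (S i).card := by
    rw [hT]
    simp only [hd, Finset.card_filter]
    rw [Finset.sum_comm]
    exact Finset.sum_congr rfl fun i _ => hsingle (S i)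
  have hUf : U = ∑ i ∈ A, ∑ j ∈ A, (S i ∩ S j).card := by
    rw [hU]
    have key : ∀ x : Fin Nh, d x ^ 2 = ∑ i ∈ A, ∑ j ∈ A, (if x ∈ S i ∩ S j then 1 else 0) := by
      intro x
      rw [hd]
      dsimp only
      rw [sq, Finset.card_filter, Finset.sum_mul_sum]
      refine Finset.sum_congr rfl fun i _ => Finset.sum_congr rfl fun j _ => ?_
      by_cases h1 : x ∈ S i <;> by_cases h2 : x ∈ S j <;> simp [h1, h2]
    simp only [key]
    rw [Finset.sum_comm]
    refine Finset.sum_congr rfl fun i _ => ?_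
    rw [Finset.sum_comm]
    exact Finset.sum_congr rfl fun j _ => hsingle _
  have hTK : K * Dh ≤ T := by
    rw [hTf]
    calc K * Dh = ∑ _i ∈ A, Dh := by rw [Finset.sum_const, smul_eq_mul]
      _ ≤ ∑ i ∈ A, (S i).card := Finset.sum_le_sum fun i _ => hS i
  have hUb : U ≤ T + K * (K * w') := by
    rw [hUf, hTf]
    have hrow : ∀ i ∈ A, ∑ j ∈ A, (S i ∩ S j).card ≤ (S i).card + K * w' := by
      intro i hi
      rw [← Finset.add_sum_erase A _ hi]
      refine Nat.add_le_add (by rw [Finset.inter_self]) ?_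
      calc ∑ j ∈ A.erase i, (S i ∩ S j).card ≤ ∑ _j ∈ A.erase i, w' :=
            Finset.sum_le_sum fun j hj =>
              hA i hi j (Finset.mem_of_mem_erase hj)
                (fun h => (Finset.ne_of_mem_erase hj) h.symm)
        _ = (A.erase i).card * w' := by rw [Finset.sum_const, smul_eq_mul]
        _ ≤ K * w' := Nat.mul_le_mul_right _ (le_trans (Finset.card_erase_le) le_rfl)
    calc ∑ i ∈ A, ∑ j ∈ A, (S i ∩ S j).card ≤ ∑ i ∈ A, ((S i).card + K * w') :=
          Finset.sum_le_sum hrow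
      _ = (∑ i ∈ A, (S i).card) + K * (K * w') := by
          rw [Finset.sum_add_distrib, Finset.sum_const, smul_eq_mul, ← hK]
  have hcs : T ^ 2 ≤ Nh * U := by
    have h := sq_sum_le_card_mul_sum_sq (s := (Finset.univ : Finset (Fin Nh))) (f := d)
    simpa [hT, hU] using h
  -- arithmetic endgame
  have hK1 : 1 ≤ K := by
    rcases Nat.eq_zero_or_pos K with h | h
    · rw [h] at hcon; omega
    · exact h
  have hB : 2 * Nh + 1 ≤ T := le_trans (by omega) hTK
  have hA2 : T * T ≤ Nh * T + Nh * (K * (K * w')) := by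
    rw [pow_two] at hcs
    calc T * T ≤ Nh * U := hcs
      _ ≤ Nh * (T + K * (K * w')) := Nat.mul_le_mul_left _ hUb
      _ = Nh * T + Nh * (K * (K * w')) := by ring
  have hs1 : 2 * (Nh * T) + T ≤ T * T := by
    calc 2 * (Nh * T) + T = T * (2 * Nh + 1) := by ring
      _ ≤ T * T := Nat.mul_le_mul_left T hB
  have hF : Nh * T + T ≤ Nh * (K * (K * w')) := by linarith
  have hG : T * T ≤ 2 * (Nh * (K * (K * w'))) := by linarith
  have hC : 4 * (Nh * (K * K)) * (w' + 1) ≤ T * T := by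
    calc 4 * (Nh * (K * K)) * (w' + 1) = (K * K) * (4 * Nh * (w' + 1)) := by ring
      _ ≤ (K * K) * Dh ^ 2 := Nat.mul_le_mul_left _ h2
      _ = (K * Dh) * (K * Dh) := by ring
      _ ≤ T * T := Nat.mul_le_mul hTK hTK
  have hX : 1 ≤ Nh * (K * K) := by
    have : 1 * (1 * 1) ≤ Nh * (K * K) :=
      Nat.mul_le_mul hN (Nat.mul_le_mul hK1 hK1)
    simpa using this
  nlinarith [hC, hG, hX]

/-- Theorem 4.12: let `D, N, M, w` be non-negative integers with
`N ≥ 3w`, `D² ≥ 4Nw` and `MD ≥ 2Nw`, and let `S₁, …, S_M` be subsets of `[N]` of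
cardinality at least `D` each. Then there are `w` indices
`i₁ < i₂ < ⋯ < i_w` such that consecutive sets `S_{i_j}, S_{i_{j+1}}` share at
least `w` elements. -/
theorem chain_of_intersecting_sets (Dh Nh Mh wh : ℕ)
    (h1 : 3 * wh ≤ Nh) (h2 : 4 * Nh * wh ≤ Dh ^ 2) (h3 : 2 * Nh * wh ≤ Mh * Dh)
    (S : Fin Mh → Finset (Fin Nh)) (hS : ∀ i, Dh ≤ (S i).card) :
    ∃ f : Fin wh → Fin Mh, StrictMono f ∧
      ∀ (j : ℕ) (hj : j + 1 < wh),
        wh ≤ (S (f ⟨j, by omega⟩) ∩ S (f ⟨j + 1, hj⟩)).card := by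
  rcases Nat.eq_zero_or_pos wh with hw0 | hw
  · subst hw0
    exact ⟨fun i => i.elim0, fun a => a.elim0, fun j hj => by omega⟩
  obtain ⟨w', rfl⟩ : ∃ w', wh = w' + 1 := ⟨wh - 1, by omega⟩
  set wh := w' + 1 with hwh
  have hN : 1 ≤ Nh := by omega
  by_contra hcon
  -- no index has rank ≥ wh
  have hno : ∀ i : Fin Mh, rnk wh S i ≤ w' := by
    intro i
    by_contra hbig
    push_neg at hbig
    obtain ⟨l, hl, _, hlen⟩ := rnk_chain wh S i
    set l' := l.take wh with hl'def
    have hlen' : l'.length = wh := by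
      rw [hl'def, List.length_take, hlen]
      omega
    have hl' : l'.Chain' (chainRel wh S) := hl.take wh
    refine hcon ⟨fun k => l'.get ⟨k.val, by rw [hlen']; exact k.isLt⟩, ?_, ?_⟩
    · have hpw : l'.Pairwise (· < ·) :=
        List.isChain_iff_pairwise.mp (hl'.imp fun a b h => h.1)
      intro a b hab
      exact List.pairwise_iff_get.mp hpw ⟨a.val, by rw [hlen']; exact a.isLt⟩
        ⟨b.val, by rw [hlen']; exact b.isLt⟩ hab
    · intro j hj
      have := List.isChain_iff_getElem.mp hl' j (by omega)
      exact this.2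
  -- partition by rank
  have hmem : ∀ i : Fin Mh, rnk wh S i ∈ Finset.Icc 1 w' := by
    intro i
    rw [Finset.mem_Icc]
    exact ⟨rnk_pos wh S i, hno i⟩
  have hsum : (Finset.univ : Finset (Fin Mh)).card =
      ∑ t ∈ Finset.Icc 1 w', ((Finset.univ : Finset (Fin Mh)).filter
        (fun i => rnk wh S i = t)).card :=
    Finset.card_eq_sum_card_fiberwise fun i _ => hmem i
  have hfiber : ∀ t, (((Finset.univ : Finset (Fin Mh)).filter
      (fun i => rnk wh S i = t)).card) * Dh ≤ 2 * Nh := by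
    intro t
    refine class_bound Dh w' hN (by simpa [hwh] using h2) S hS _ ?_
    intro i hi j hj hij
    rw [Finset.mem_filter] at hi hj
    by_contra hbig
    push_neg at hbig
    rcases lt_trichotomy i j with h | h | h
    · have := rnk_lt wh S h hbig
      omega
    · exact hij h
    · have := rnk_lt wh S h (by rwa [Finset.inter_comm])
      omega
  have hMh : Mh = ∑ t ∈ Finset.Icc 1 w', ((Finset.univ : Finset (Fin Mh)).filter
      (fun i => rnk wh S i = t)).card := by
    simpa using hsum
  have hbound : Mh * Dh ≤ w' * (2 * Nh) := by
    have hMD : Mh * Dh = ∑ t ∈ Finset.Icc 1 w', (((Finset.univ : Finset (Fin Mh)).filter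
        (fun i => rnk wh S i = t)).card) * Dh := by
      have := congrArg (· * Dh) hMh
      simpa [Finset.sum_mul] using this
    calc Mh * Dh = ∑ t ∈ Finset.Icc 1 w', (((Finset.univ : Finset (Fin Mh)).filter
          (fun i => rnk wh S i = t)).card) * Dh := hMD
      _ ≤ ∑ _t ∈ Finset.Icc 1 w', 2 * Nh := Finset.sum_le_sum fun t _ => hfiber t
      _ = (Finset.Icc 1 w').card * (2 * Nh) := by rw [Finset.sum_const, smul_eq_mul]
      _ = w' * (2 * Nh) := by simp [Nat.card_Icc]
  have hfin : 2 * Nh * (w' + 1) ≤ w' * (2 * Nh) := le_trans h3 hbound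
  nlinarith [hfin, hN]
end

section
/- Let D̂, N̂, ŵ be positive integers with N̂ ≥ 3ŵ and D̂^2 ≥ 4·N̂·ŵ, and let S be any collection of r = ⌈2N̂/D̂⌉ subsets of {1,…,N̂}, each of cardinality at least D̂. Then there are two distinct sets S_i, S_j ∈ S with |S_i ∩ S_j| ≥ ŵ. -/
open SimpleGraph

lemma union_count_aux {α : Type*} [DecidableEq α] (m : ℕ) :
    ∀ T : Finset (Finset α),
      (∀ s ∈ T, ∀ t ∈ T, s ≠ t → (s ∩ t).card ≤ m) →
      ∑ s ∈ T, s.card ≤ (T.biUnion id).card + m * T.card.choose 2 := by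
  intro T
  induction T using Finset.induction_on with
  | empty => simp
  | @insert a T ha ih =>
    intro h
    have hT : ∀ s ∈ T, ∀ t ∈ T, s ≠ t → (s ∩ t).card ≤ m := by
      intro s hs t ht hst
      exact h s (Finset.mem_insert_of_mem hs) t (Finset.mem_insert_of_mem ht) hst
    have hsum := ih hT
    set U := T.biUnion id with hU
    have hbU : (insert a T).biUnion id = a ∪ U := by
      simp [Finset.biUnion_insert, hU]
    have hcap : (a ∩ U).card ≤ T.card * m := by
      have h1 : a ∩ U = T.biUnion (fun t => a ∩ t) := by
        ext x; simp [hU, Finset.mem_biUnion]; tauto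
      calc (a ∩ U).card ≤ ∑ t ∈ T, (a ∩ t).card := by
            rw [h1]; exact Finset.card_biUnion_le
        _ ≤ ∑ _t ∈ T, m := by
            apply Finset.sum_le_sum
            intro t ht
            exact h a (Finset.mem_insert_self a T) t (Finset.mem_insert_of_mem ht)
              (fun hat => ha (hat ▸ ht))
        _ = T.card * m := by simp [Finset.sum_const, mul_comm]
    have hcu : (a ∪ U).card + (a ∩ U).card = a.card + U.card :=
      Finset.card_union_add_card_inter a U
    have hchoose : (T.card + 1).choose 2 = T.card.choose 2 + T.card := by
      rw [Nat.choose_succ_succ]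
      simp [Nat.choose_one_right, Nat.add_comm]
    rw [Finset.sum_insert ha, hbU, Finset.card_insert_of_notMem ha, hchoose]
    calc a.card + ∑ s ∈ T, s.card
        ≤ a.card + (U.card + m * T.card.choose 2) := by omega
      _ ≤ (a ∪ U).card + (a ∩ U).card - U.card + (U.card + m * T.card.choose 2) := by omega
      _ ≤ (a ∪ U).card + T.card * m - U.card + (U.card + m * T.card.choose 2) := by omega
      _ ≤ (a ∪ U).card + m * (T.card.choose 2 + T.card) := by
          have : U.card ≤ (a ∪ U).card := Finset.card_le_card Finset.subset_union_right
          ring_nf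
          omega


/-- Claim 4.13: let `D, N, w` be positive integers with
`N ≥ 3w` and `D² ≥ 4Nw`, and let `𝒮` be any collection of `r = ⌈2N/D⌉` subsets of
`[N]`, each of cardinality at least `D`. Then two distinct sets of `𝒮` share at
least `w` elements. -/
theorem two_intersecting_sets (Dh Nh wh : ℕ)
    (hD : 0 < Dh) (hN : 0 < Nh) (hw : 0 < wh)
    (h1 : 3 * wh ≤ Nh) (h2 : 4 * Nh * wh ≤ Dh ^ 2)
    (Ss : Finset (Finset (Fin Nh)))
    (hr : Ss.card = (2 * Nh + Dh - 1) / Dh)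
    (hsets : ∀ s ∈ Ss, Dh ≤ s.card) :
    ∃ s ∈ Ss, ∃ t ∈ Ss, s ≠ t ∧ wh ≤ (s ∩ t).card := by
  by_contra hcon
  push_neg at hcon
  set r := (2 * Nh + Dh - 1) / Dh with hrdef
  have hdm := Nat.div_add_mod (2 * Nh + Dh - 1) Dh
  have hmod := Nat.mod_lt (2 * Nh + Dh - 1) hD
  rw [← hrdef] at hdm
  have hr1 : 1 ≤ r := (Nat.one_le_div_iff hD).mpr (by omega)
  have hne : Ss.Nonempty := Finset.card_pos.mp (by omega)
  obtain ⟨s0, hs0⟩ := hne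
  have hDN : Dh ≤ Nh := le_trans (hsets s0 hs0)
    (le_trans (Finset.card_le_univ s0) (by simp))
  -- counting
  have hcount := union_count_aux (wh - 1) Ss
    (fun s hs t ht hst => by have := hcon s hs t ht hst; omega)
  have hUnion : (Ss.biUnion id).card ≤ Nh :=
    le_trans (Finset.card_le_univ _) (by simp)
  have hsum : Ss.card * Dh ≤ ∑ s ∈ Ss, s.card := by
    have := Finset.card_nsmul_le_sum Ss (fun s => s.card) Dh hsets
    simpa [smul_eq_mul] using this
  have hev : 2 ∣ r * (r - 1) := by
    have h := Nat.even_mul_succ_self (r - 1)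
    rw [Nat.sub_add_cancel hr1] at h
    rw [mul_comm]
    exact h.two_dvd
  have hc2 : 2 * r.choose 2 = r * (r - 1) := by
    rw [Nat.choose_two_right]
    exact Nat.mul_div_cancel' hev
  rw [hr] at hsum
  -- key inequality: r * Dh ≤ Nh + (wh-1) * choose r 2
  have hkey : r * Dh ≤ Nh + (wh - 1) * r.choose 2 := le_trans hsum (le_trans hcount (by rw [hr]; omega))
  -- reparametrize
  obtain ⟨r1, hr1'⟩ : ∃ r1, r = r1 + 1 := ⟨r - 1, by omega⟩
  obtain ⟨w1, hw1'⟩ : ∃ w1, wh = w1 + 1 := ⟨wh - 1, by omega⟩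
  clear_value r
  subst hr1' hw1'
  rw [Nat.mul_comm] at hkey
  -- div/mod facts
  have F1 : 2 * Nh ≤ Dh * (r1 + 1) := by omega
  have F2 : Dh * r1 + 1 ≤ 2 * Nh := by
    have : Dh * (r1 + 1) = Dh * r1 + Dh := by ring
    omega
  have F3 : Dh * (r1 + 1) ≤ 3 * Nh := by omega
  -- from hkey and F1: Nh ≤ w1 * choose, then doubled
  have hkey2 : 2 * Nh ≤ 2 * (w1 * ((r1 + 1).choose 2)) := by
    simp only [Nat.add_sub_cancel] at hkey
    omega
  have hkey3 : 2 * Nh ≤ w1 * ((r1 + 1) * r1) := by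
    have : 2 * (w1 * ((r1 + 1).choose 2)) = w1 * (2 * (r1 + 1).choose 2) := by ring
    rw [this, hc2] at hkey2
    simpa using hkey2
  -- multiply by Dh^2
  have e3 : 2 * Nh * Dh ^ 2 ≤ w1 * ((r1 + 1) * r1) * Dh ^ 2 :=
    Nat.mul_le_mul_right _ hkey3
  have e1 : w1 * ((r1 + 1) * r1) * Dh ^ 2 = w1 * ((Dh * (r1 + 1)) * (Dh * r1)) := by ring
  have e2 : w1 * ((Dh * (r1 + 1)) * (Dh * r1)) ≤ w1 * ((3 * Nh) * (2 * Nh)) :=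
    Nat.mul_le_mul_left _ (Nat.mul_le_mul F3 (by omega))
  have e4 : 2 * Nh * (4 * Nh * (w1 + 1)) ≤ 2 * Nh * Dh ^ 2 :=
    Nat.mul_le_mul_left _ h2
  have final : 2 * Nh * (4 * Nh * (w1 + 1)) ≤ w1 * (3 * Nh * (2 * Nh)) := by omega
  nlinarith [sq_nonneg Nh, hN, final]
end
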